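/- arXiv:2101.09740 — 11 statements merged into one kernel-verified Lean document; each statement's English description precedes it below -/
import Mathlib

section
/- The function y ↦ V_𝒯(y) − (μ/2)‖y‖² is convex on ℝ^d; equivalently, V_𝒯 is μ-strongly convex (in the sense that subtracting the quadratic (μ/2)‖·‖² leaves a convex function, where μ may be negative). -/
open scoped RealInnerProductSpace BigOperators

/-- The auxiliary quadratic function `v_T(y, α)` from the strongly-convex extension
construction. -/
noncomputable def vT {d : ℕ} {I : Type*} [Fintype I] (L μ : ℝ)
    (x g : I → EuclideanSpace ℝ (Fin d)) (f : I → ℝ)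
    (y : EuclideanSpace ℝ (Fin d)) (α : I → ℝ) : ℝ :=
  L / 2 * ‖y‖ ^ 2
    - (L - μ) / 2 * ‖y - (1 / (L - μ)) • ∑ i, α i • (g i - μ • x i)‖ ^ 2
    + ∑ i, α i * (f i + 1 / (2 * (L - μ)) * ‖g i - L • x i‖ ^ 2 - L / 2 * ‖x i‖ ^ 2)

/-- The strongly-convex extension `V_T(y) = max_{α ∈ Δ_I} v_T(y, α)`. -/
noncomputable def VT {d : ℕ} {I : Type*} [Fintype I] (L μ : ℝ)
    (x g : I → EuclideanSpace ℝ (Fin d)) (f : I → ℝ)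
    (y : EuclideanSpace ℝ (Fin d)) : ℝ :=
  sSup (vT L μ x g f y '' stdSimplex ℝ I)

lemma vT_affine {d : ℕ} {I : Type*} [Fintype I] (L μ : ℝ)
    (x g : I → EuclideanSpace ℝ (Fin d)) (f : I → ℝ)
    (y : EuclideanSpace ℝ (Fin d)) (α : I → ℝ) :
    vT L μ x g f y α - μ / 2 * ‖y‖ ^ 2
      = (L - μ) * ⟪y, (1 / (L - μ)) • ∑ i, α i • (g i - μ • x i)⟫
        - (L - μ) / 2 * ‖(1 / (L - μ)) • ∑ i, α i • (g i - μ • x i)‖ ^ 2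
        + ∑ i, α i * (f i + 1 / (2 * (L - μ)) * ‖g i - L • x i‖ ^ 2 - L / 2 * ‖x i‖ ^ 2) := by
  rw [vT, norm_sub_sq_real]
  ring

lemma vT_comb {d : ℕ} {I : Type*} [Fintype I] (L μ : ℝ)
    (x g : I → EuclideanSpace ℝ (Fin d)) (f : I → ℝ)
    (y1 y2 : EuclideanSpace ℝ (Fin d)) (α : I → ℝ) (a b : ℝ) (hab : a + b = 1) :
    vT L μ x g f (a • y1 + b • y2) α - μ / 2 * ‖a • y1 + b • y2‖ ^ 2
      = a * (vT L μ x g f y1 α - μ / 2 * ‖y1‖ ^ 2)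
        + b * (vT L μ x g f y2 α - μ / 2 * ‖y2‖ ^ 2) := by
  rw [vT_affine, vT_affine, vT_affine, inner_add_left, real_inner_smul_left,
    real_inner_smul_left]
  have hb : b = 1 - a := by linarith
  subst hb; ring

lemma vT_continuous {d : ℕ} {I : Type*} [Fintype I] (L μ : ℝ)
    (x g : I → EuclideanSpace ℝ (Fin d)) (f : I → ℝ)
    (y : EuclideanSpace ℝ (Fin d)) :
    Continuous fun α : I → ℝ => vT L μ x g f y α := by
  unfold vT
  fun_prop

lemma VT_bddAbove {d : ℕ} {I : Type*} [Fintype I] (L μ : ℝ)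
    (x g : I → EuclideanSpace ℝ (Fin d)) (f : I → ℝ)
    (y : EuclideanSpace ℝ (Fin d)) :
    BddAbove (vT L μ x g f y '' stdSimplex ℝ I) :=
  ((isCompact_stdSimplex ℝ I).image (vT_continuous L μ x g f y)).bddAbove

/-- `V_T(·) − (μ/2)‖·‖²` is convex on all of `ℝ^d`, i.e. `V_T` is `μ`-strongly convex
(where `μ` may be negative). -/
theorem stmt1 {d : ℕ} {I : Type*} [Fintype I] [Nonempty I]
    {L μ : ℝ} (hL : 0 < L) (hμL : μ < L)
    (x g : I → EuclideanSpace ℝ (Fin d)) (f : I → ℝ) :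
    ConvexOn ℝ Set.univ (fun y : EuclideanSpace ℝ (Fin d) =>
      VT L μ x g f y - μ / 2 * ‖y‖ ^ 2) := by
  refine ⟨convex_univ, ?_⟩
  intro y1 _ y2 _ a b ha hb hab
  simp only [smul_eq_mul]
  have hne : ((stdSimplex ℝ I) : Set (I → ℝ)).Nonempty := by classical exact ⟨_, single_mem_stdSimplex ℝ (Classical.arbitrary I)⟩
  have key : VT L μ x g f (a • y1 + b • y2)
      ≤ a * (VT L μ x g f y1 - μ / 2 * ‖y1‖ ^ 2)
        + b * (VT L μ x g f y2 - μ / 2 * ‖y2‖ ^ 2)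
        + μ / 2 * ‖a • y1 + b • y2‖ ^ 2 := by
    apply csSup_le (hne.image _)
    rintro _ ⟨α, hα, rfl⟩
    have h1 : vT L μ x g f y1 α ≤ VT L μ x g f y1 :=
      le_csSup (VT_bddAbove L μ x g f y1) ⟨α, hα, rfl⟩
    have h2 : vT L μ x g f y2 α ≤ VT L μ x g f y2 :=
      le_csSup (VT_bddAbove L μ x g f y2) ⟨α, hα, rfl⟩
    have hc := vT_comb L μ x g f y1 y2 α a b hab
    nlinarith [mul_le_mul_of_nonneg_left h1 ha, mul_le_mul_of_nonneg_left h2 hb]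
  linarith
end

section
/- The function y ↦ (L/2)‖y‖² − V_𝒯(y) is convex on ℝ^d. -/
open scoped RealInnerProductSpace BigOperators

lemma key_id {E : Type*} [NormedAddCommGroup E] [InnerProductSpace ℝ E]
    {L μ : ℝ} (hμL : μ < L) (y₁ y₂ S₁ S₂ : E) (c₁ c₂ t s : ℝ) (hts : t + s = 1) :
    (L / 2 * ‖t • y₁ + s • y₂‖ ^ 2
      - (L - μ) / 2 * ‖(t • y₁ + s • y₂) - (1 / (L - μ)) • (t • S₁ + s • S₂)‖ ^ 2
      + (t * c₁ + s * c₂))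
    + L * t * s / 2 * ‖y₁ - y₂‖ ^ 2
    - t * (L / 2 * ‖y₁‖ ^ 2 - (L - μ) / 2 * ‖y₁ - (1 / (L - μ)) • S₁‖ ^ 2 + c₁)
    - s * (L / 2 * ‖y₂‖ ^ 2 - (L - μ) / 2 * ‖y₂ - (1 / (L - μ)) • S₂‖ ^ 2 + c₂)
    = t * s * (L - μ) / 2 * ‖(y₁ - y₂) - (1 / (L - μ)) • (S₁ - S₂)‖ ^ 2 := by
  have hK : L - μ ≠ 0 := by linarith
  simp only [← real_inner_self_eq_norm_sq, inner_sub_left, inner_sub_right,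
    inner_add_left, inner_add_right, inner_smul_left, inner_smul_right,
    RCLike.conj_to_real]
  rw [real_inner_comm y₂ y₁, real_inner_comm S₁ y₁, real_inner_comm S₂ y₁,
    real_inner_comm S₁ y₂, real_inner_comm S₂ y₂, real_inner_comm S₂ S₁]
  have hs' : s = 1 - t := by linarith
  subst hs'
  field_simp
  ring

lemma norm_id {E : Type*} [NormedAddCommGroup E] [InnerProductSpace ℝ E]
    (L : ℝ) (y₁ y₂ : E) (t s : ℝ) (hts : t + s = 1) :
    t * (L / 2 * ‖y₁‖ ^ 2) + s * (L / 2 * ‖y₂‖ ^ 2) - L / 2 * ‖t • y₁ + s • y₂‖ ^ 2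
      = L * t * s / 2 * ‖y₁ - y₂‖ ^ 2 := by
  simp only [← real_inner_self_eq_norm_sq, inner_sub_left, inner_sub_right,
    inner_add_left, inner_add_right, inner_smul_left, inner_smul_right,
    RCLike.conj_to_real]
  rw [real_inner_comm y₂ y₁]
  have hs' : s = 1 - t := by linarith
  subst hs'
  ring

lemma sSup_combo {S T : Set ℝ} (hS : S.Nonempty) (hT : T.Nonempty)
    (hBS : BddAbove S) (hBT : BddAbove T) {t s C : ℝ} (ht : 0 ≤ t) (hs : 0 ≤ s)
    (h : ∀ a ∈ S, ∀ b ∈ T, t * a + s * b ≤ C) :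
    t * sSup S + s * sSup T ≤ C := by
  have step : ∀ a ∈ S, t * a + s * sSup T ≤ C := by
    intro a ha
    rcases eq_or_lt_of_le hs with hs0 | hs0
    · obtain ⟨b, hb⟩ := hT
      have := h a ha b hb
      rw [← hs0] at this ⊢
      linarith
    · have h1 : sSup T ≤ (C - t * a) / s := by
        apply csSup_le hT
        intro b hb
        rw [le_div_iff₀ hs0]
        linarith [h a ha b hb]
      have := mul_le_mul_of_nonneg_left h1 hs
      rw [mul_div_cancel₀ _ (ne_of_gt hs0)] at this
      linarith
  rcases eq_or_lt_of_le ht with ht0 | ht0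
  · obtain ⟨a, ha⟩ := hS
    have := step a ha
    rw [← ht0] at this ⊢
    linarith
  · have h1 : sSup S ≤ (C - s * sSup T) / t := by
      apply csSup_le hS
      intro a ha
      rw [le_div_iff₀ ht0]
      linarith [step a ha]
    have := mul_le_mul_of_nonneg_left h1 ht
    rw [mul_div_cancel₀ _ (ne_of_gt ht0)] at this
    linarith

/-- `(L/2)‖·‖² − V_T(·)` is convex on all of `ℝ^d`, i.e. `V_T` is `L`-smooth from above. -/
theorem stmt2 {d : ℕ} {I : Type*} [Fintype I] [Nonempty I]
    {L μ : ℝ} (hL : 0 < L) (hμL : μ < L)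
    (x g : I → EuclideanSpace ℝ (Fin d)) (f : I → ℝ) :
    ConvexOn ℝ Set.univ (fun y : EuclideanSpace ℝ (Fin d) =>
      L / 2 * ‖y‖ ^ 2 - VT L μ x g f y) := by
  classical
  set c : I → ℝ := fun i =>
    f i + 1 / (2 * (L - μ)) * ‖g i - L • x i‖ ^ 2 - L / 2 * ‖x i‖ ^ 2 with hc
  have hne : (stdSimplex ℝ I).Nonempty :=
    ⟨_, single_mem_stdSimplex ℝ (Classical.arbitrary I)⟩
  have hcont : ∀ y : EuclideanSpace ℝ (Fin d), Continuous (vT L μ x g f y) := by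
    intro y
    unfold vT
    fun_prop
  have hbdd : ∀ y : EuclideanSpace ℝ (Fin d),
      BddAbove (vT L μ x g f y '' stdSimplex ℝ I) :=
    fun y => ((isCompact_stdSimplex ℝ I).image (hcont y)).bddAbove
  have hmemne : ∀ y : EuclideanSpace ℝ (Fin d),
      (vT L μ x g f y '' stdSimplex ℝ I).Nonempty := fun y => hne.image _
  refine ⟨convex_univ, ?_⟩
  intro y₁ _ y₂ _ t s ht hs hts
  simp only [smul_eq_mul]
  have key : t * VT L μ x g f y₁ + s * VT L μ x g f y₂
      ≤ VT L μ x g f (t • y₁ + s • y₂) + L * t * s / 2 * ‖y₁ - y₂‖ ^ 2 := by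
    apply sSup_combo (hmemne y₁) (hmemne y₂) (hbdd y₁) (hbdd y₂) ht hs
    rintro a ⟨α₁, hα₁, rfl⟩ b ⟨α₂, hα₂, rfl⟩
    have hmix : (fun i => t * α₁ i + s * α₂ i) ∈ stdSimplex ℝ I :=
      convex_stdSimplex ℝ I hα₁ hα₂ ht hs hts
    have hle : vT L μ x g f (t • y₁ + s • y₂) (fun i => t * α₁ i + s * α₂ i)
        ≤ VT L μ x g f (t • y₁ + s • y₂) := le_csSup (hbdd _) ⟨_, hmix, rfl⟩
    set S₁ : EuclideanSpace ℝ (Fin d) := ∑ i, α₁ i • (g i - μ • x i) with hS₁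
    set S₂ : EuclideanSpace ℝ (Fin d) := ∑ i, α₂ i • (g i - μ • x i) with hS₂
    have hSmix : ∑ i, (t * α₁ i + s * α₂ i) • (g i - μ • x i) = t • S₁ + s • S₂ := by
      rw [hS₁, hS₂, Finset.smul_sum, Finset.smul_sum, ← Finset.sum_add_distrib]
      refine Finset.sum_congr rfl fun i _ => ?_
      rw [add_smul, smul_smul, smul_smul]
    have hCmix : ∑ i, (t * α₁ i + s * α₂ i) * c i
        = t * (∑ i, α₁ i * c i) + s * (∑ i, α₂ i * c i) := by
      rw [Finset.mul_sum, Finset.mul_sum, ← Finset.sum_add_distrib]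
      exact Finset.sum_congr rfl fun i _ => by ring
    have e1 : vT L μ x g f y₁ α₁
        = L / 2 * ‖y₁‖ ^ 2 - (L - μ) / 2 * ‖y₁ - (1 / (L - μ)) • S₁‖ ^ 2
          + ∑ i, α₁ i * c i := rfl
    have e2 : vT L μ x g f y₂ α₂
        = L / 2 * ‖y₂‖ ^ 2 - (L - μ) / 2 * ‖y₂ - (1 / (L - μ)) • S₂‖ ^ 2
          + ∑ i, α₂ i * c i := rfl
    have emix : vT L μ x g f (t • y₁ + s • y₂) (fun i => t * α₁ i + s * α₂ i)
        = L / 2 * ‖t • y₁ + s • y₂‖ ^ 2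
          - (L - μ) / 2 * ‖(t • y₁ + s • y₂) - (1 / (L - μ)) • (t • S₁ + s • S₂)‖ ^ 2
          + (t * (∑ i, α₁ i * c i) + s * (∑ i, α₂ i * c i)) := by
      unfold vT
      rw [hSmix, hCmix]
    have hid := key_id hμL y₁ y₂ S₁ S₂ (∑ i, α₁ i * c i) (∑ i, α₂ i * c i) t s hts
    have hnn : 0 ≤ t * s * (L - μ) / 2
        * ‖(y₁ - y₂) - (1 / (L - μ)) • (S₁ - S₂)‖ ^ 2 := by
      have : 0 ≤ L - μ := by linarith
      positivity
    rw [e1, e2]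
    rw [emix] at hle
    linarith
  have hnorm := norm_id L y₁ y₂ t s hts
  linarith
end

section
/- The function V_𝒯 is differentiable at every point of ℝ^d; moreover, if in addition 0 ≤ μ, then its gradient ∇V_𝒯 is Lipschitz continuous with Lipschitz constant L (i.e., ‖∇V_𝒯(y) − ∇V_𝒯(z)‖ ≤ L‖y − z‖ for all y, z ∈ ℝ^d). -/
open scoped RealInnerProductSpace BigOperators

section auxGrad

variable {E : Type*} [NormedAddCommGroup E] [InnerProductSpace ℝ E] [CompleteSpace E]

/-- A two-sided quadratic error bound implies differentiability with the given gradient. -/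
lemma hasGradientAt_of_le_sq {f : E → ℝ} {y w : E} {C : ℝ} (hC : 0 < C)
    (h : ∀ z, |f z - f y - ⟪w, z - y⟫| ≤ C * ‖z - y‖ ^ 2) :
    HasGradientAt f w y := by
  rw [hasGradientAt_iff_isLittleO, Asymptotics.isLittleO_iff]
  intro c hc
  have hev : ∀ᶠ z in nhds y, ‖z - y‖ ≤ c / C := by
    filter_upwards [Metric.closedBall_mem_nhds y (div_pos hc hC)] with z hz
    rwa [Metric.mem_closedBall, dist_eq_norm] at hz
  filter_upwards [hev] with z hz
  have h1 := h z
  have h2 : (0:ℝ) ≤ ‖z - y‖ := norm_nonneg _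
  have h3 : C * ‖z - y‖ ≤ c := by
    rw [le_div_iff₀ hC] at hz; linarith
  rw [Real.norm_eq_abs]
  calc |f z - f y - ⟪w, z - y⟫| ≤ C * ‖z - y‖ ^ 2 := h1
    _ ≤ c * ‖z - y‖ := by nlinarith

end auxGrad

set_option maxHeartbeats 1000000 in
/-- `V_T` is differentiable everywhere, and if moreover `0 ≤ μ` then its gradient is
Lipschitz continuous with constant `L`. -/
theorem stmt3 {d : ℕ} {I : Type*} [Fintype I] [Nonempty I]
    {L μ : ℝ} (hL : 0 < L) (hμL : μ < L)
    (x g : I → EuclideanSpace ℝ (Fin d)) (f : I → ℝ) :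
    (∀ y, DifferentiableAt ℝ (VT L μ x g f) y) ∧
    (0 ≤ μ → ∀ y z : EuclideanSpace ℝ (Fin d),
      ‖gradient (VT L μ x g f) y - gradient (VT L μ x g f) z‖ ≤ L * ‖y - z‖) := by
  have hs : (0:ℝ) < L - μ := by linarith
  set u : (I → ℝ) → EuclideanSpace ℝ (Fin d) :=
    fun α => (1 / (L - μ)) • ∑ i, α i • (g i - μ • x i) with hu
  set b : (I → ℝ) → ℝ :=
    fun α => ∑ i, α i * (f i + 1 / (2 * (L - μ)) * ‖g i - L • x i‖ ^ 2 - L / 2 * ‖x i‖ ^ 2)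
    with hb
  have hvT : ∀ (y : EuclideanSpace ℝ (Fin d)) (α : I → ℝ), vT L μ x g f y α
      = L / 2 * ‖y‖ ^ 2 - ((L - μ) / 2 * ‖y - u α‖ ^ 2 - b α) := by
    intro y α
    simp only [vT, hu, hb]
    ring
  have hu_aff : ∀ (α β : I → ℝ) (t : ℝ),
      u ((1 - t) • α + t • β) = (1 - t) • u α + t • u β := by
    intro α β t
    simp only [hu, Pi.add_apply, Pi.smul_apply, smul_eq_mul, add_smul, mul_smul,
      Finset.sum_add_distrib, Finset.smul_sum, smul_add]
    simp only [smul_smul]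
    congr 1 <;> refine Finset.sum_congr rfl fun i _ => ?_ <;> module
  have hb_aff : ∀ (α β : I → ℝ) (t : ℝ),
      b ((1 - t) • α + t • β) = (1 - t) * b α + t * b β := by
    intro α β t
    simp only [hb, Pi.add_apply, Pi.smul_apply, smul_eq_mul, add_mul,
      Finset.sum_add_distrib, Finset.mul_sum, mul_assoc]
  -- existence of a maximizer over the simplex
  have hcont : ∀ y : EuclideanSpace ℝ (Fin d), Continuous (vT L μ x g f y) := by
    intro y
    unfold vT
    fun_prop
  have hmax : ∀ y : EuclideanSpace ℝ (Fin d), ∃ α ∈ stdSimplex ℝ I,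
      ∀ β ∈ stdSimplex ℝ I, vT L μ x g f y β ≤ vT L μ x g f y α := by
    intro y
    obtain ⟨α, hα, h⟩ := (isCompact_stdSimplex ℝ I).exists_isMaxOn
      ⟨_, @single_mem_stdSimplex ℝ I _ _ _ (Classical.decEq I) _ (Classical.arbitrary I)⟩
      ((hcont y).continuousOn)
    exact ⟨α, hα, fun β hβ => h hβ⟩
  choose p hp hmaxp using hmax
  have VT_eq : ∀ y, VT L μ x g f y = vT L μ x g f y (p y) := by
    intro y
    apply IsGreatest.csSup_eq
    exact ⟨⟨p y, hp y, rfl⟩, by rintro _ ⟨β, hβ, rfl⟩; exact hmaxp y β hβ⟩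
  -- the Moreau-envelope-style minimality
  have Emin : ∀ y, ∀ β ∈ stdSimplex ℝ I,
      (L - μ) / 2 * ‖y - u (p y)‖ ^ 2 - b (p y)
        ≤ (L - μ) / 2 * ‖y - u β‖ ^ 2 - b β := by
    intro y β hβ
    have h := hmaxp y β hβ
    rw [hvT y β, hvT y (p y)] at h
    linarith
  -- subgradient-type inequality for the minimizer
  have KI : ∀ y, ∀ β ∈ stdSimplex ℝ I,
      (L - μ) * ⟪y - u (p y), u β - u (p y)⟫ + (b β - b (p y)) ≤ 0 := by
    intro y β hβ
    set P := u (p y) with hP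
    set A := (L - μ) * ⟪y - P, u β - P⟫ + (b β - b (p y)) with hA
    set M := (L - μ) / 2 * ‖u β - P‖ ^ 2 with hM
    have hM0 : 0 ≤ M := by positivity
    have key : ∀ t : ℝ, 0 < t → t ≤ 1 → A ≤ t * M := by
      intro t ht0 ht1
      have hγ : (1 - t) • (p y) + t • β ∈ stdSimplex ℝ I :=
        convex_stdSimplex ℝ I (hp y) hβ (by linarith) (le_of_lt ht0) (by ring)
      have h1 := Emin y _ hγ
      rw [hu_aff, hb_aff] at h1
      have h2 : y - ((1 - t) • P + t • u β) = (y - P) - t • (u β - P) := by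
        module
      rw [h2] at h1
      have h4 : ‖y - P - t • (u β - P)‖ ^ 2
          = ‖y - P‖ ^ 2 - 2 * (t * ⟪y - P, u β - P⟫) + t ^ 2 * ‖u β - P‖ ^ 2 := by
        rw [norm_sub_sq_real, real_inner_smul_right, norm_smul, Real.norm_eq_abs,
          mul_pow, sq_abs]
      rw [h4] at h1
      simp only [hA, hM]
      nlinarith [h1, ht0]
    by_contra hcon
    push_neg at hcon
    have hden : 0 < A + M := by linarith
    have ht0 : 0 < A / (A + M) := by positivity
    have ht1 : A / (A + M) ≤ 1 := by rw [div_le_one hden]; linarith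
    have hk := key _ ht0 ht1
    rw [div_mul_eq_mul_div, le_div_iff₀ hden] at hk
    nlinarith
  -- firm nonexpansiveness of y ↦ u (p y)
  have FN : ∀ y z, ‖u (p y) - u (p z)‖ ^ 2 ≤ ⟪y - z, u (p y) - u (p z)⟫ := by
    intro y z
    have h1 := KI y (p z) (hp z)
    have h2 := KI z (p y) (hp y)
    set P := u (p y) with hP
    set Q := u (p z) with hQ
    have h3 : ⟪y - P, Q - P⟫ + ⟪z - Q, P - Q⟫ ≤ 0 := by nlinarith [h1, h2]
    have key : ⟪y - P, Q - P⟫ + ⟪z - Q, P - Q⟫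
        = ⟪P - Q, P - Q⟫ - ⟪y - z, P - Q⟫ := by
      simp only [inner_sub_left, inner_sub_right]
      ring
    have h5 : ⟪P - Q, P - Q⟫ = ‖P - Q‖ ^ 2 := real_inner_self_eq_norm_sq _
    linarith [key ▸ h3, h5]
  have unorm : ∀ y z, ‖u (p y) - u (p z)‖ ≤ ‖y - z‖ := by
    intro y z
    have h1 := FN y z
    have h2 := real_inner_le_norm (y - z) (u (p y) - u (p z))
    nlinarith [norm_nonneg (u (p y) - u (p z)), norm_nonneg (y - z)]
  have diffnorm : ∀ y z, ‖(y - z) - (u (p y) - u (p z))‖ ≤ ‖y - z‖ := by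
    intro y z
    have h1 := FN y z
    have h3 : ‖(y - z) - (u (p y) - u (p z))‖ ^ 2 ≤ ‖y - z‖ ^ 2 := by
      rw [norm_sub_sq_real]
      nlinarith [h1, sq_nonneg ‖u (p y) - u (p z)‖]
    nlinarith [norm_nonneg ((y - z) - (u (p y) - u (p z))), norm_nonneg (y - z)]
  -- the gradient
  have hgrad : ∀ y, HasGradientAt (VT L μ x g f) (μ • y + (L - μ) • u (p y)) y := by
    intro y
    apply hasGradientAt_of_le_sq (C := L / 2 + 3 * (L - μ) / 2) (by linarith)
    intro z
    have EzA := Emin z (p y) (hp y)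
    have EyB := Emin y (p z) (hp z)
    have ex1 : ‖z - (u (p y))‖ ^ 2 = ‖y - (u (p y))‖ ^ 2 + 2 * ⟪y - (u (p y)), z - y⟫ + ‖z - y‖ ^ 2 := by
      have h : z - (u (p y)) = (y - (u (p y))) + (z - y) := by abel
      rw [h, norm_add_sq_real]
    have ex2 : ‖y - (u (p z))‖ ^ 2 = ‖z - (u (p z))‖ ^ 2 + 2 * ⟪z - (u (p z)), y - z⟫ + ‖y - z‖ ^ 2 := by
      have h : y - (u (p z)) = (z - (u (p z))) + (y - z) := by abel
      rw [h, norm_add_sq_real]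
    rw [ex1] at EzA
    rw [ex2] at EyB
    have hnrev2 : ‖y - z‖ ^ 2 = ‖z - y‖ ^ 2 := by rw [norm_sub_rev]
    have hneg : ⟪z - (u (p z)), y - z⟫ = -⟪z - (u (p z)), z - y⟫ := by
      rw [← inner_neg_right]; congr 1; abel
    have hsplit : ⟪(z - (u (p z))) - (y - (u (p y))), z - y⟫ = ⟪z - (u (p z)), z - y⟫ - ⟪y - (u (p y)), z - y⟫ :=
      inner_sub_left _ _ _
    have hd : |⟪(z - (u (p z))) - (y - (u (p y))), z - y⟫| ≤ ‖z - y‖ ^ 2 := by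
      have h5 : (z - (u (p z))) - (y - (u (p y))) = (z - y) - ((u (p z)) - (u (p y))) := by abel
      calc |⟪(z - (u (p z))) - (y - (u (p y))), z - y⟫| ≤ ‖(z - (u (p z))) - (y - (u (p y)))‖ * ‖z - y‖ :=
            abs_real_inner_le_norm _ _
        _ ≤ ‖z - y‖ * ‖z - y‖ := by
            rw [h5]
            exact mul_le_mul_of_nonneg_right (diffnorm z y) (norm_nonneg _)
        _ = ‖z - y‖ ^ 2 := (sq ‖z - y‖).symm
    have habs := abs_le.1 hd
    have hd2 : (L - μ) * ⟪(z - (u (p z))) - (y - (u (p y))), z - y⟫ ≤ (L - μ) * ‖z - y‖ ^ 2 :=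
      mul_le_mul_of_nonneg_left habs.2 hs.le
    have hd3 : (L - μ) * (-(‖z - y‖ ^ 2)) ≤ (L - μ) * ⟪(z - (u (p z))) - (y - (u (p y))), z - y⟫ :=
      mul_le_mul_of_nonneg_left habs.1 hs.le
    have ez : ‖z‖ ^ 2 = ‖y‖ ^ 2 + 2 * ⟪y, z - y⟫ + ‖z - y‖ ^ 2 := by
      have h : z = y + (z - y) := by abel
      conv_lhs => rw [h]
      rw [norm_add_sq_real]
    have hw : ⟪μ • y + (L - μ) • (u (p y)), z - y⟫ = μ * ⟪y, z - y⟫ + (L - μ) * ⟪(u (p y)), z - y⟫ := by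
      rw [inner_add_left, real_inner_smul_left, real_inner_smul_left]
    have hyP : ⟪y - (u (p y)), z - y⟫ = ⟪y, z - y⟫ - ⟪(u (p y)), z - y⟫ := inner_sub_left _ _ _
    have hyP' : (L - μ) * ⟪y - u (p y), z - y⟫
        = (L - μ) * ⟪y, z - y⟫ - (L - μ) * ⟪u (p y), z - y⟫ := by
      rw [hyP]; ring
    have hneg' : (L - μ) * ⟪z - u (p z), y - z⟫ = -((L - μ) * ⟪z - u (p z), z - y⟫) := by
      rw [hneg]; ring
    have hsplit' : (L - μ) * ⟪(z - u (p z)) - (y - u (p y)), z - y⟫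
        = (L - μ) * ⟪z - u (p z), z - y⟫ - (L - μ) * ⟪y - u (p y), z - y⟫ := by
      rw [hsplit]; ring
    have hnrev2' : (L - μ) * ‖y - z‖ ^ 2 = (L - μ) * ‖z - y‖ ^ 2 := by rw [hnrev2]
    have hLa : 0 ≤ L * ‖z - y‖ ^ 2 := by positivity
    have hsa : 0 ≤ (L - μ) * ‖z - y‖ ^ 2 := by positivity
    rw [VT_eq z, VT_eq y, hvT z (p z), hvT y (p y), hw, ez, abs_le]
    constructor
    · linarith [EzA, EyB, hd2, hd3, hneg, hsplit, hyP', hnrev2', hneg', hsplit', hLa, hsa, hs, hL]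
    · linarith [EzA, EyB, hd2, hd3, hneg, hsplit, hyP', hnrev2', hneg', hsplit', hLa, hsa, hs, hL]
  have hgradval : ∀ y, gradient (VT L μ x g f) y = μ • y + (L - μ) • u (p y) :=
    fun y => (hgrad y).gradient
  constructor
  · exact fun y => (hgrad y).differentiableAt
  · intro hμ y z
    rw [hgradval y, hgradval z]
    have h1 : (μ • y + (L - μ) • u (p y)) - (μ • z + (L - μ) • u (p z))
        = μ • (y - z) + (L - μ) • (u (p y) - u (p z)) := by module
    rw [h1]
    calc ‖μ • (y - z) + (L - μ) • (u (p y) - u (p z))‖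
        ≤ ‖μ • (y - z)‖ + ‖(L - μ) • (u (p y) - u (p z))‖ := norm_add_le _ _
      _ = μ * ‖y - z‖ + (L - μ) * ‖u (p y) - u (p z)‖ := by
          rw [norm_smul, norm_smul, Real.norm_eq_abs, Real.norm_eq_abs,
            abs_of_nonneg hμ, abs_of_nonneg hs.le]
      _ ≤ μ * ‖y - z‖ + (L - μ) * ‖y - z‖ := by
          have := unorm y z
          gcongr
      _ = L * ‖y - z‖ := by ring
end

section
/- Let i ∈ I and suppose that for every j ∈ I the strongly convex interpolation condition holds: (1/(2L))‖g_i − g_j‖² + (μL/(2(L−μ)))‖x_i − x_j − (1/L)(g_i − g_j)‖² ≤ f_i − f_j − ⟨g_j, x_i − x_j⟩. Then V_𝒯(x_i) = f_i and V_𝒯 is differentiable at x_i with gradient ∇V_𝒯(x_i) = g_i. -/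
open scoped RealInnerProductSpace BigOperators

section helpers

variable {E : Type*} [NormedAddCommGroup E] [InnerProductSpace ℝ E]

/-- Complete-the-square bound. -/
lemma sq_bound' {t : ℝ} (ht : 0 < t) (y c a : E) :
    -(t / 2) * ‖y - c‖ ^ 2 ≤ ⟪a, y⟫ - ⟪a, c⟫ + ‖a‖ ^ 2 / (2 * t) := by
  have h1 : ‖y - c + (1 / t) • a‖ ^ 2
      = ‖y - c‖ ^ 2 + 2 * ((1 / t) * ⟪y - c, a⟫) + (1 / t) ^ 2 * ‖a‖ ^ 2 := by
    rw [norm_add_sq_real, real_inner_smul_right, norm_smul, Real.norm_eq_abs,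
      abs_of_pos (by positivity : (0:ℝ) < 1 / t)]
    ring
  have h2 : ⟪y - c, a⟫ = ⟪a, y⟫ - ⟪a, c⟫ := by
    rw [real_inner_comm, inner_sub_right]
  have key : ⟪a, y⟫ - ⟪a, c⟫ + ‖a‖ ^ 2 / (2 * t) + (t / 2) * ‖y - c‖ ^ 2
      = (t / 2) * ‖y - c + (1 / t) • a‖ ^ 2 := by
    rw [h1, h2]; field_simp; ring
  nlinarith [sq_nonneg ‖y - c + (1 / t) • a‖, key]

/-- The per-vertex bracket inequality derived from the interpolation condition. -/
lemma bracket_le' {L μ : ℝ} (hL : 0 < L) (hμL : μ < L)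
    (xi xj gi gj : E) (fi fj : ℝ)
    (h : 1 / (2 * L) * ‖gi - gj‖ ^ 2
        + μ * L / (2 * (L - μ)) * ‖xi - xj - (1 / L) • (gi - gj)‖ ^ 2
      ≤ fi - fj - ⟪gj, xi - xj⟫) :
    fj + 1 / (2 * (L - μ)) * ‖gj - L • xj‖ ^ 2 - L / 2 * ‖xj‖ ^ 2
        - (1 / (L - μ)) * ⟪gi - L • xi, gj - μ • xj⟫ + ‖gi - L • xi‖ ^ 2 / (2 * (L - μ))
      ≤ fi - ⟪gi, xi⟫ + L / 2 * ‖xi‖ ^ 2 := by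
  have ht : (0:ℝ) < L - μ := sub_pos.mpr hμL
  have key : (fi - ⟪gi, xi⟫ + L / 2 * ‖xi‖ ^ 2)
      - (fj + 1 / (2 * (L - μ)) * ‖gj - L • xj‖ ^ 2 - L / 2 * ‖xj‖ ^ 2
        - (1 / (L - μ)) * ⟪gi - L • xi, gj - μ • xj⟫ + ‖gi - L • xi‖ ^ 2 / (2 * (L - μ)))
      = (fi - fj - ⟪gj, xi - xj⟫)
        - (1 / (2 * L) * ‖gi - gj‖ ^ 2
          + μ * L / (2 * (L - μ)) * ‖xi - xj - (1 / L) • (gi - gj)‖ ^ 2) := by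
    simp only [norm_sub_sq_real, inner_sub_left, inner_sub_right, real_inner_smul_left,
      real_inner_smul_right, norm_smul, mul_pow, sq_abs, Real.norm_eq_abs]
    simp only [real_inner_comm gi xi, real_inner_comm gi xj, real_inner_comm gj xi,
      real_inner_comm gj xj, real_inner_comm gj gi, real_inner_comm xj xi]
    field_simp
    ring
  linarith [h, key]

/-- quadratic identity for the lower bound through a single vertex. -/
lemma vT_lower_id {L μ : ℝ} (hμL : μ < L) (xi gi y : E) (fi : ℝ) :
    L / 2 * ‖y‖ ^ 2 - (L - μ) / 2 * ‖y - (1 / (L - μ)) • (gi - μ • xi)‖ ^ 2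
        + (fi + 1 / (2 * (L - μ)) * ‖gi - L • xi‖ ^ 2 - L / 2 * ‖xi‖ ^ 2)
      = fi + ⟪gi, y - xi⟫ + μ / 2 * ‖y - xi‖ ^ 2 := by
  have ht : (0:ℝ) < L - μ := sub_pos.mpr hμL
  simp only [norm_sub_sq_real, inner_sub_left, inner_sub_right, real_inner_smul_left,
    real_inner_smul_right, norm_smul, mul_pow, sq_abs, Real.norm_eq_abs]
  simp only [real_inner_comm gi y, real_inner_comm xi y, real_inner_comm xi gi]
  field_simp
  ring

/-- quadratic identity for the upper bound. -/
lemma qhi_id' {L : ℝ} (xi gi y : E) (fi : ℝ) :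
    L / 2 * ‖y‖ ^ 2 + ⟪gi - L • xi, y⟫ + (fi - ⟪gi, xi⟫ + L / 2 * ‖xi‖ ^ 2)
      = fi + ⟪gi, y - xi⟫ + L / 2 * ‖y - xi‖ ^ 2 := by
  simp only [norm_sub_sq_real, inner_sub_left, inner_sub_right, real_inner_smul_left,
    real_inner_smul_right, norm_smul, mul_pow, sq_abs, Real.norm_eq_abs]
  simp only [real_inner_comm gi y, real_inner_comm xi y, real_inner_comm xi gi]
  ring

end helpers

/-- If the strongly convex interpolation conditions hold at index `i` (with respect to
every `j`), then `V_T` interpolates the data at `x_i`: `V_T(x_i) = f_i`, `V_T` is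
differentiable at `x_i`, and `∇V_T(x_i) = g_i`. -/
theorem stmt5 {d : ℕ} {I : Type*} [Fintype I] [Nonempty I]
    {L μ : ℝ} (hL : 0 < L) (hμL : μ < L)
    (x g : I → EuclideanSpace ℝ (Fin d)) (f : I → ℝ) (i : I)
    (hinterp : ∀ j : I,
      1 / (2 * L) * ‖g i - g j‖ ^ 2
          + μ * L / (2 * (L - μ)) * ‖x i - x j - (1 / L) • (g i - g j)‖ ^ 2
        ≤ f i - f j - ⟪g j, x i - x j⟫) :
    VT L μ x g f (x i) = f i ∧
    DifferentiableAt ℝ (VT L μ x g f) (x i) ∧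
    gradient (VT L μ x g f) (x i) = g i := by
  classical
  have ht : (0:ℝ) < L - μ := sub_pos.mpr hμL
  set a : EuclideanSpace ℝ (Fin d) := g i - L • x i with ha
  set K : ℝ := f i - ⟪g i, x i⟫ + L / 2 * ‖x i‖ ^ 2 with hK
  -- upper bound on vT over the simplex
  have hub : ∀ y : EuclideanSpace ℝ (Fin d), ∀ α ∈ stdSimplex ℝ I,
      vT L μ x g f y α ≤ f i + ⟪g i, y - x i⟫ + L / 2 * ‖y - x i‖ ^ 2 := by
    intro y α hα
    obtain ⟨hα0, hα1⟩ := hα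
    set c : EuclideanSpace ℝ (Fin d) := (1 / (L - μ)) • ∑ j, α j • (g j - μ • x j) with hc
    have expand : ⟪a, c⟫ = ∑ j, α j * ((1 / (L - μ)) * ⟪a, g j - μ • x j⟫) := by
      rw [hc, real_inner_smul_right, inner_sum, Finset.mul_sum]
      exact Finset.sum_congr rfl fun j _ => by rw [real_inner_smul_right]; ring
    have hsum : (∑ j, α j * (f j + 1 / (2 * (L - μ)) * ‖g j - L • x j‖ ^ 2 - L / 2 * ‖x j‖ ^ 2))
        - ⟪a, c⟫ + ‖a‖ ^ 2 / (2 * (L - μ)) ≤ K := by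
      rw [expand]
      have step : (∑ j, α j * (f j + 1 / (2 * (L - μ)) * ‖g j - L • x j‖ ^ 2 - L / 2 * ‖x j‖ ^ 2))
          - (∑ j, α j * ((1 / (L - μ)) * ⟪a, g j - μ • x j⟫)) + ‖a‖ ^ 2 / (2 * (L - μ))
          = ∑ j, α j * ((f j + 1 / (2 * (L - μ)) * ‖g j - L • x j‖ ^ 2 - L / 2 * ‖x j‖ ^ 2)
              - (1 / (L - μ)) * ⟪a, g j - μ • x j⟫ + ‖a‖ ^ 2 / (2 * (L - μ))) := by
        rw [← Finset.sum_sub_distrib]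
        have hq2 : (‖a‖ ^ 2 / (2 * (L - μ))) = ∑ j, α j * (‖a‖ ^ 2 / (2 * (L - μ))) := by
          rw [← Finset.sum_mul, hα1, one_mul]
        conv_lhs => rw [hq2]
        rw [← Finset.sum_add_distrib]
        exact Finset.sum_congr rfl fun j _ => by ring
      rw [step]
      have hKsum : K = ∑ j, α j * K := by rw [← Finset.sum_mul, hα1, one_mul]
      rw [hKsum]
      refine Finset.sum_le_sum fun j _ => mul_le_mul_of_nonneg_left ?_ (hα0 j)
      have := bracket_le' hL hμL (x i) (x j) (g i) (g j) (f i) (f j) (hinterp j)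
      rw [hK, ha]
      linarith [this]
    have hsq := sq_bound' ht y c a
    have hq := qhi_id' (E := EuclideanSpace ℝ (Fin d)) (L := L) (x i) (g i) y (f i)
    have hvt : vT L μ x g f y α = L / 2 * ‖y‖ ^ 2 - (L - μ) / 2 * ‖y - c‖ ^ 2
        + ∑ j, α j * (f j + 1 / (2 * (L - μ)) * ‖g j - L • x j‖ ^ 2 - L / 2 * ‖x j‖ ^ 2) := by
      simp only [vT, hc]
    rw [hvt, ← hq, ← ha]
    linarith [hsq, hsum]
  -- VT bounded above
  have hbdd : ∀ y : EuclideanSpace ℝ (Fin d), BddAbove (vT L μ x g f y '' stdSimplex ℝ I) :=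
    fun y => ⟨f i + ⟪g i, y - x i⟫ + L / 2 * ‖y - x i‖ ^ 2, by
      rintro v ⟨α, hα, rfl⟩; exact hub y α hα⟩
  have hVub : ∀ y, VT L μ x g f y ≤ f i + ⟪g i, y - x i⟫ + L / 2 * ‖y - x i‖ ^ 2 := by
    intro y
    refine csSup_le ⟨vT L μ x g f y (Pi.single i 1),
      Set.mem_image_of_mem _ (single_mem_stdSimplex ℝ i)⟩ ?_
    rintro v ⟨α, hα, rfl⟩; exact hub y α hα
  -- value at the single vertex
  have hsingle : ∀ y : EuclideanSpace ℝ (Fin d),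
      vT L μ x g f y (Pi.single i 1) = f i + ⟪g i, y - x i⟫ + μ / 2 * ‖y - x i‖ ^ 2 := by
    intro y
    have s1 : (∑ j, (Pi.single i 1 : I → ℝ) j • (g j - μ • x j)) = g i - μ • x i := by
      simp [Pi.single_apply, ite_smul, Finset.sum_ite_eq']
    have s2 : (∑ j, (Pi.single i 1 : I → ℝ) j *
        (f j + 1 / (2 * (L - μ)) * ‖g j - L • x j‖ ^ 2 - L / 2 * ‖x j‖ ^ 2))
        = f i + 1 / (2 * (L - μ)) * ‖g i - L • x i‖ ^ 2 - L / 2 * ‖x i‖ ^ 2 := by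
      simp [Pi.single_apply, ite_mul, Finset.sum_ite_eq']
    rw [vT, s1, s2]
    exact vT_lower_id hμL (x i) (g i) y (f i)
  have hVlb : ∀ y, f i + ⟪g i, y - x i⟫ + μ / 2 * ‖y - x i‖ ^ 2 ≤ VT L μ x g f y := by
    intro y
    rw [← hsingle y]
    exact le_csSup (hbdd y) (Set.mem_image_of_mem _ (single_mem_stdSimplex ℝ i))
  have hVx : VT L μ x g f (x i) = f i := by
    have h1 := hVub (x i); have h2 := hVlb (x i)
    simp only [sub_self, inner_zero_right, norm_zero] at h1 h2
    linarith
  have hgrad : HasGradientAt (VT L μ x g f) (g i) (x i) := by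
    rw [hasGradientAt_iff_isLittleO, Asymptotics.isLittleO_iff]
    intro ε hε
    obtain ⟨C, hC0, hmu, hLC⟩ : ∃ C : ℝ, 0 < C ∧ |μ| / 2 ≤ C ∧ L / 2 ≤ C :=
      ⟨max |μ| L / 2 + 1, by positivity,
        by linarith [le_max_left |μ| L], by linarith [le_max_right |μ| L]⟩
    rw [Metric.eventually_nhds_iff]
    refine ⟨ε / C, by positivity, fun {y} hy => ?_⟩
    rw [dist_eq_norm] at hy
    have h1 := hVub y; have h2 := hVlb y
    rw [hVx]
    rw [Real.norm_eq_abs, abs_le]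
    have hn : (0:ℝ) ≤ ‖y - x i‖ := norm_nonneg _
    have habs : -|μ| ≤ μ ∧ μ ≤ |μ| := ⟨neg_abs_le μ, le_abs_self μ⟩
    have e1 : L / 2 * ‖y - x i‖ ^ 2 ≤ C * ‖y - x i‖ ^ 2 :=
      mul_le_mul_of_nonneg_right hLC (sq_nonneg _)
    have hmC : -C ≤ μ / 2 := by linarith [habs.1]
    have e2 : (-C) * ‖y - x i‖ ^ 2 ≤ μ / 2 * ‖y - x i‖ ^ 2 :=
      mul_le_mul_of_nonneg_right hmC (sq_nonneg _)
    have hupper : VT L μ x g f y - f i - ⟪g i, y - x i⟫ ≤ C * ‖y - x i‖ ^ 2 := by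
      linarith
    have hlower : -(C * ‖y - x i‖ ^ 2) ≤ VT L μ x g f y - f i - ⟪g i, y - x i⟫ := by
      linarith
    have hfin : C * ‖y - x i‖ ^ 2 ≤ ε * ‖y - x i‖ := by
      have hCe : C * ‖y - x i‖ ≤ ε := by
        calc C * ‖y - x i‖ ≤ C * (ε / C) := mul_le_mul_of_nonneg_left hy.le hC0.le
          _ = ε := by field_simp
      have : C * ‖y - x i‖ ^ 2 = (C * ‖y - x i‖) * ‖y - x i‖ := by ring
      rw [this]
      exact mul_le_mul_of_nonneg_right hCe hn
    exact ⟨by linarith, by linarith⟩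
  exact ⟨hVx, hgrad.differentiableAt, hgrad.gradient⟩
end

section
/- Let j, k ∈ I and suppose that for every i ∈ I one has f_j − (1/(L−μ))⟨g_j − μ x_j, g_i − μ x_i⟩ + (1/(2(L−μ)))‖g_j − L x_j‖² − (L/2)‖x_j‖² ≥ f_k − (1/(L−μ))⟨g_k − μ x_k, g_i − μ x_i⟩ + (1/(2(L−μ)))‖g_k − L x_k‖² − (L/2)‖x_k‖². Then for every y ∈ ℝ^d satisfying ⟨g_j − μ x_j, y⟩ > ⟨g_k − μ x_k, y⟩ and every α* ∈ Δ_I that maximizes α ↦ v_𝒯(y, α) over Δ_I, it holds that α*_k = 0. -/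
open scoped RealInnerProductSpace BigOperators

lemma vt_expand {d : ℕ} {I : Type*} [Fintype I] {L μ : ℝ} (h : L - μ ≠ 0)
    (x g : I → EuclideanSpace ℝ (Fin d)) (f : I → ℝ)
    (y : EuclideanSpace ℝ (Fin d)) (α : I → ℝ) :
    vT L μ x g f y α =
      L / 2 * ‖y‖ ^ 2 - (L - μ) / 2 * ‖y‖ ^ 2
      + ⟪∑ i, α i • (g i - μ • x i), y⟫
      - 1 / (2 * (L - μ)) * ‖∑ i, α i • (g i - μ • x i)‖ ^ 2
      + ∑ i, α i * (f i + 1 / (2 * (L - μ)) * ‖g i - L • x i‖ ^ 2 - L / 2 * ‖x i‖ ^ 2) := by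
  unfold vT
  rw [norm_sub_sq_real, inner_smul_right, norm_smul, mul_pow, real_inner_comm]
  simp only [Real.norm_eq_abs, sq_abs]
  field_simp
  ring


set_option maxHeartbeats 1000000 in
/-- If the data at indices `j, k` satisfies the stated inequality for every `i`, then for
any `y` with `⟪g_j − μx_j, y⟫ > ⟪g_k − μx_k, y⟫`, every maximizer `α` of `v_T(y, ·)` over
the unit simplex has `α_k = 0`. -/
theorem stmt6 {d : ℕ} {I : Type*} [Fintype I] [Nonempty I]
    {L μ : ℝ} (hL : 0 < L) (hμL : μ < L)
    (x g : I → EuclideanSpace ℝ (Fin d)) (f : I → ℝ) (j k : I)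
    (hjk : ∀ i : I,
      f j - 1 / (L - μ) * ⟪g j - μ • x j, g i - μ • x i⟫
          + 1 / (2 * (L - μ)) * ‖g j - L • x j‖ ^ 2 - L / 2 * ‖x j‖ ^ 2
        ≥ f k - 1 / (L - μ) * ⟪g k - μ • x k, g i - μ • x i⟫
          + 1 / (2 * (L - μ)) * ‖g k - L • x k‖ ^ 2 - L / 2 * ‖x k‖ ^ 2) :
    ∀ y : EuclideanSpace ℝ (Fin d), ⟪g j - μ • x j, y⟫ > ⟪g k - μ • x k, y⟫ →
      ∀ α ∈ stdSimplex ℝ I, (∀ β ∈ stdSimplex ℝ I, vT L μ x g f y β ≤ vT L μ x g f y α) →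
        α k = 0 := by
  classical
  have hLμ : (0:ℝ) < L - μ := sub_pos.mpr hμL
  have hLμ' : L - μ ≠ 0 := ne_of_gt hLμ
  intro y hy α hα hmax
  by_contra hk0
  have hαk : 0 < α k := lt_of_le_of_ne (hα.1 k) (Ne.symm hk0)
  set u : I → EuclideanSpace ℝ (Fin d) := fun i => g i - μ • x i with hu
  set w : EuclideanSpace ℝ (Fin d) := u j - u k with hw
  have hyw : 0 < ⟪w, y⟫ := by
    have := sub_pos.mpr hy
    simpa [hw, hu, inner_sub_left] using this
  have hjne : j ≠ k := by
    intro h; rw [h] at hy; exact lt_irrefl _ hy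
  have hwne : w ≠ 0 := by
    intro h; rw [h] at hyw; simp at hyw
  have hw2 : 0 < ‖w‖ ^ 2 := by
    have : 0 < ‖w‖ := norm_pos_iff.mpr hwne
    positivity
  set t : ℝ := min (α k) ((L - μ) * ⟪w, y⟫ / ‖w‖ ^ 2) with ht
  have ht0 : 0 < t := lt_min hαk (div_pos (mul_pos hLμ hyw) hw2)
  have htk : t ≤ α k := min_le_left _ _
  have htb : t * ‖w‖ ^ 2 ≤ (L - μ) * ⟪w, y⟫ := by
    have hm := min_le_right (α k) ((L - μ) * ⟪w, y⟫ / ‖w‖ ^ 2)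
    calc t * ‖w‖ ^ 2 ≤ ((L - μ) * ⟪w, y⟫ / ‖w‖ ^ 2) * ‖w‖ ^ 2 :=
          mul_le_mul_of_nonneg_right hm (le_of_lt hw2)
      _ = (L - μ) * ⟪w, y⟫ := by field_simp
  set β : I → ℝ := fun i => α i + (if i = j then t else 0) - (if i = k then t else 0) with hβdef
  have hβ : β ∈ stdSimplex ℝ I := by
    constructor
    · intro i
      by_cases hij : i = j
      · subst hij
        have := hα.1 i
        simp only [hβdef, if_pos rfl, if_neg hjne, if_true, eq_self_iff_true]
        linarith
      · by_cases hik : i = k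
        · subst hik
          simp only [hβdef, if_neg hij, if_pos rfl, if_true, eq_self_iff_true]
          linarith
        · have := hα.1 i
          simp only [hβdef, if_neg hij, if_neg hik]
          linarith
    · have h1 : ∑ i, (if i = j then t else 0) = t := by
        rw [Finset.sum_ite_eq' Finset.univ j (fun _ => t)]; simp
      have h2 : ∑ i, (if i = k then t else 0) = t := by
        rw [Finset.sum_ite_eq' Finset.univ k (fun _ => t)]; simp
      have : ∑ i, β i = (∑ i, α i) + t - t := by
        simp only [hβdef]
        rw [Finset.sum_sub_distrib, Finset.sum_add_distrib, h1, h2]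
      rw [this, hα.2]; ring
  set q : I → ℝ := fun i => f i + 1 / (2 * (L - μ)) * ‖g i - L • x i‖ ^ 2 - L / 2 * ‖x i‖ ^ 2
    with hq
  set S : EuclideanSpace ℝ (Fin d) := ∑ i, α i • u i with hS
  have hSβ : ∑ i, β i • u i = S + t • w := by
    have h1 : ∑ i, (if i = j then t else 0) • u i = t • u j := by
      rw [show (fun i => (if i = j then t else 0) • u i)
        = fun i => (if i = j then t • u j else 0) from by
          funext i; by_cases hij : i = j
          · subst hij; rw [if_pos rfl, if_pos rfl]
          · rw [if_neg hij, if_neg hij, zero_smul]]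
      rw [Finset.sum_ite_eq' Finset.univ j (fun _ => t • u j)]; simp
    have h2 : ∑ i, (if i = k then t else 0) • u i = t • u k := by
      rw [show (fun i => (if i = k then t else 0) • u i)
        = fun i => (if i = k then t • u k else 0) from by
          funext i; by_cases hik : i = k
          · subst hik; rw [if_pos rfl, if_pos rfl]
          · rw [if_neg hik, if_neg hik, zero_smul]]
      rw [Finset.sum_ite_eq' Finset.univ k (fun _ => t • u k)]; simp
    calc ∑ i, β i • u i
        = ∑ i, (α i • u i + (if i = j then t else 0) • u i - (if i = k then t else 0) • u i) := by
          refine Finset.sum_congr rfl fun i _ => ?_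
          simp only [hβdef]; rw [sub_smul, add_smul]
      _ = S + t • w := by
          rw [Finset.sum_sub_distrib, Finset.sum_add_distrib, h1, h2, add_sub_assoc, hw,
            smul_sub t (u j) (u k)]
  have hqβ : ∑ i, β i * q i = (∑ i, α i * q i) + t * q j - t * q k := by
    have h1 : ∑ i, (if i = j then t else 0) * q i = t * q j := by
      rw [show (fun i => (if i = j then t else 0) * q i)
        = fun i => (if i = j then t * q j else 0) from by
          funext i; by_cases hij : i = j
          · subst hij; rw [if_pos rfl, if_pos rfl]
          · rw [if_neg hij, if_neg hij, zero_mul]]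
      rw [Finset.sum_ite_eq' Finset.univ j (fun _ => t * q j)]; simp
    have h2 : ∑ i, (if i = k then t else 0) * q i = t * q k := by
      rw [show (fun i => (if i = k then t else 0) * q i)
        = fun i => (if i = k then t * q k else 0) from by
          funext i; by_cases hik : i = k
          · subst hik; rw [if_pos rfl, if_pos rfl]
          · rw [if_neg hik, if_neg hik, zero_mul]]
      rw [Finset.sum_ite_eq' Finset.univ k (fun _ => t * q k)]; simp
    calc ∑ i, β i * q i
        = ∑ i, (α i * q i + (if i = j then t else 0) * q i - (if i = k then t else 0) * q i) := by
          refine Finset.sum_congr rfl fun i _ => ?_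
          simp only [hβdef]; ring
      _ = (∑ i, α i * q i) + t * q j - t * q k := by
          rw [Finset.sum_sub_distrib, Finset.sum_add_distrib, h1, h2]
  have hSw : 1 / (L - μ) * ⟪S, w⟫ ≤ q j - q k := by
    have hSw1 : ⟪S, w⟫ = ∑ i, α i * ⟪w, u i⟫ := by
      rw [hS, sum_inner]
      refine Finset.sum_congr rfl fun i _ => ?_
      rw [real_inner_smul_left, real_inner_comm]
    have hb : ∀ i : I, α i * (1 / (L - μ) * ⟪w, u i⟫) ≤ α i * (q j - q k) := by
      intro i
      refine mul_le_mul_of_nonneg_left ?_ (hα.1 i)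
      have hji := hjk i
      have hwi : ⟪w, u i⟫ = ⟪u j, u i⟫ - ⟪u k, u i⟫ := by rw [hw, inner_sub_left]
      rw [hwi]
      simp only [hq, hu]
      linarith [mul_sub (1 / (L - μ)) (⟪u j, u i⟫ : ℝ) (⟪u k, u i⟫ : ℝ)]
    calc 1 / (L - μ) * ⟪S, w⟫ = ∑ i, α i * (1 / (L - μ) * ⟪w, u i⟫) := by
          rw [hSw1, Finset.mul_sum]
          refine Finset.sum_congr rfl fun i _ => ?_; ring
      _ ≤ ∑ i, α i * (q j - q k) := Finset.sum_le_sum (fun i _ => hb i)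
      _ = q j - q k := by rw [← Finset.sum_mul, hα.2, one_mul]
  have hdiff : vT L μ x g f y β - vT L μ x g f y α
      = t * ⟪w, y⟫ - 1 / (L - μ) * (t * ⟪S, w⟫) - t ^ 2 / (2 * (L - μ)) * ‖w‖ ^ 2
        + t * (q j - q k) := by
    rw [vt_expand hLμ' x g f y β, vt_expand hLμ' x g f y α]
    have hfold : ∀ γ : I → ℝ,
        (∑ i, γ i * (f i + 1 / (2 * (L - μ)) * ‖g i - L • x i‖ ^ 2 - L / 2 * ‖x i‖ ^ 2))
          = ∑ i, γ i * q i := fun γ => rfl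
    have hufold : ∀ γ : I → ℝ,
        (∑ i, γ i • (g i - μ • x i)) = ∑ i, γ i • u i := fun γ => rfl
    rw [hfold β, hfold α, hufold β, hufold α, hqβ, hSβ, ← hS]
    rw [inner_add_left, real_inner_smul_left,
      norm_add_sq_real, real_inner_smul_right, norm_smul]
    simp only [Real.norm_eq_abs, mul_pow, sq_abs]
    field_simp
    ring
  have hfinal : vT L μ x g f y α < vT L μ x g f y β := by
    have h1 : 1 / (L - μ) * (t * ⟪S, w⟫) ≤ t * (q j - q k) := by
      have hmm := mul_le_mul_of_nonneg_left hSw (le_of_lt ht0)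
      calc 1 / (L - μ) * (t * ⟪S, w⟫) = t * (1 / (L - μ) * ⟪S, w⟫) := by ring
        _ ≤ t * (q j - q k) := hmm
    have h2 : t ^ 2 / (2 * (L - μ)) * ‖w‖ ^ 2 ≤ t * ⟪w, y⟫ / 2 := by
      have hmm := mul_le_mul_of_nonneg_left htb (le_of_lt ht0)
      rw [div_mul_eq_mul_div, div_le_div_iff₀ (by positivity) (by norm_num)]
      nlinarith
    have h3 : 0 < t * ⟪w, y⟫ / 2 := by positivity
    nlinarith [hdiff]
  exact absurd (hmax β hβ) (not_le.mpr hfinal)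
end

section
/- Let I = {0, …, n+m−1} and suppose: (i) x_0 = 0; (ii) ⟨g_i − μ x_i, g_j − μ x_j⟩ = ⟨g_i − μ x_i, g_k − μ x_k⟩ for all 0 ≤ i < j ≤ n−1 and all k ∈ K_j; (iii) for all 0 ≤ j ≤ n−1, i ∈ I and k ∈ K_j, f_j − (1/(L−μ))⟨g_i − μ x_i, g_j − μ x_j⟩ + (1/(2(L−μ)))‖g_j − L x_j‖² − (L/2)‖x_j‖² ≥ f_k − (1/(L−μ))⟨g_i − μ x_i, g_k − μ x_k⟩ + (1/(2(L−μ)))‖g_k − L x_k‖² − (L/2)‖x_k‖²; (iv) for each 0 ≤ j ≤ n−1 there exists v ∈ ℝ^d with ⟨g_j − μ x_j, v⟩ > ⟨g_k − μ x_k, v⟩ for all k ∈ K_j. Then V_𝒯 is a first-order zero-chain on {g_i − μ x_i}_{0≤i≤n−1}: for every 0 ≤ j ≤ n−1 and every y ∈ span{g_0 − μ x_0, …, g_{j−1} − μ x_{j−1}} (with span of the empty family equal to {0}), the gradient ∇V_𝒯(y) lies in span{g_0 − μ x_0, …, g_j − μ x_j}. -/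
open scoped RealInnerProductSpace BigOperators

/-- `K_j`: the set of indices `k` such that `g_k − μ x_k` does not lie in the span of
`{g_0 − μ x_0, …, g_j − μ x_j}`. -/
def Kset {d n : ℕ} (μ : ℝ) (x g : Fin n → EuclideanSpace ℝ (Fin d)) (j : ℕ) :
    Set (Fin n) :=
  {k | g k - μ • x k ∉
    Submodule.span ℝ ((fun i => g i - μ • x i) '' {i : Fin n | (i : ℕ) ≤ j})}

section Aux
variable {d : ℕ} {I : Type*} [Fintype I] [DecidableEq I]

noncomputable def sv (μ : ℝ) (x g : I → EuclideanSpace ℝ (Fin d)) (α : I → ℝ) :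
    EuclideanSpace ℝ (Fin d) := ∑ i, α i • (g i - μ • x i)

noncomputable def cc (L μ : ℝ) (x g : I → EuclideanSpace ℝ (Fin d)) (f : I → ℝ) (i : I) : ℝ :=
  f i + 1 / (2 * (L - μ)) * ‖g i - L • x i‖ ^ 2 - L / 2 * ‖x i‖ ^ 2

noncomputable def psi (L μ : ℝ) (x g : I → EuclideanSpace ℝ (Fin d)) (f : I → ℝ)
    (y : EuclideanSpace ℝ (Fin d)) (α : I → ℝ) : ℝ :=
  ⟪y, sv μ x g α⟫ - ‖sv μ x g α‖ ^ 2 / (2 * (L - μ)) + ∑ i, α i * cc L μ x g f i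

variable {L μ : ℝ} {x g : I → EuclideanSpace ℝ (Fin d)} {f : I → ℝ}

theorem sv_comb (α δ : I → ℝ) (t : ℝ) :
    sv μ x g (fun i => α i + t * δ i) = sv μ x g α + t • sv μ x g δ := by
  simp [sv, add_smul, mul_smul, Finset.sum_add_distrib, Finset.smul_sum]

theorem sv_sub (α β : I → ℝ) :
    sv μ x g (fun i => α i - β i) = sv μ x g α - sv μ x g β := by
  simp [sv, sub_smul, Finset.sum_sub_distrib]

theorem lc_comb (α δ : I → ℝ) (t : ℝ) (c : I → ℝ) :
    ∑ i, (α i + t * δ i) * c i = ∑ i, α i * c i + t * ∑ i, δ i * c i := by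
  simp [add_mul, Finset.sum_add_distrib, Finset.mul_sum, mul_assoc]

theorem lc_sub (α β : I → ℝ) (c : I → ℝ) :
    ∑ i, (α i - β i) * c i = ∑ i, α i * c i - ∑ i, β i * c i := by
  simp [sub_mul, Finset.sum_sub_distrib]

theorem sv_single (j : I) :
    sv μ x g (fun i => if i = j then (1:ℝ) else 0) = g j - μ • x j := by
  simp [sv, ite_smul]

theorem lc_single (j : I) (c : I → ℝ) : ∑ i, (if i = j then (1:ℝ) else 0) * c i = c j := by
  simp [ite_mul]

theorem psi_expand (hμL : μ < L) (y : EuclideanSpace ℝ (Fin d)) (α β : I → ℝ) :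
    psi L μ x g f y β = psi L μ x g f y α
      + ⟪y, sv μ x g β - sv μ x g α⟫
      - ⟪sv μ x g α, sv μ x g β - sv μ x g α⟫ / (L - μ)
      - ‖sv μ x g β - sv μ x g α‖ ^ 2 / (2 * (L - μ))
      + (∑ i, β i * cc L μ x g f i - ∑ i, α i * cc L μ x g f i) := by
  have h0 : L - μ ≠ 0 := sub_ne_zero.mpr hμL.ne'
  have hb : ‖sv μ x g β‖ ^ 2 = ‖sv μ x g α‖ ^ 2
      + 2 * ⟪sv μ x g α, sv μ x g β - sv μ x g α⟫ + ‖sv μ x g β - sv μ x g α‖ ^ 2 := by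
    have := norm_add_sq_real (sv μ x g α) (sv μ x g β - sv μ x g α)
    simpa using this
  have hyy : ⟪y, sv μ x g β - sv μ x g α⟫ = ⟪y, sv μ x g β⟫ - ⟪y, sv μ x g α⟫ :=
    inner_sub_right _ _ _
  simp only [psi]
  rw [hb, hyy]
  generalize ⟪y, sv μ x g β⟫ = q at *
  generalize ⟪y, sv μ x g α⟫ = p at *
  generalize hr : ⟪sv μ x g α, sv μ x g β - sv μ x g α⟫ = r at *
  generalize ‖sv μ x g α‖ = na at *
  generalize ‖sv μ x g β - sv μ x g α‖ = nd at *
  generalize (∑ i, β i * cc L μ x g f i) = lb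
  generalize (∑ i, α i * cc L μ x g f i) = la
  field_simp
  ring

theorem psi_shift (y u : EuclideanSpace ℝ (Fin d)) (α : I → ℝ) :
    psi L μ x g f (y + u) α = psi L μ x g f y α + ⟪u, sv μ x g α⟫ := by
  simp only [psi, inner_add_left]; ring

theorem psi_add_smul (hμL : μ < L) (y : EuclideanSpace ℝ (Fin d)) (a δ : I → ℝ) (t : ℝ) :
    psi L μ x g f y (fun i => a i + t * δ i)
      = psi L μ x g f y a
        + t * (⟪y, sv μ x g δ⟫ - ⟪sv μ x g a, sv μ x g δ⟫ / (L - μ)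
            + ∑ i, δ i * cc L μ x g f i)
        - t ^ 2 * (‖sv μ x g δ‖ ^ 2 / (2 * (L - μ))) := by
  have h0 : L - μ ≠ 0 := sub_ne_zero.mpr hμL.ne'
  rw [psi_expand hμL y a (fun i => a i + t * δ i)]
  have hsv : sv μ x g (fun i => a i + t * δ i) - sv μ x g a = t • sv μ x g δ := by
    rw [sv_comb]; abel
  have hlc : ∑ i, (a i + t * δ i) * cc L μ x g f i - ∑ i, a i * cc L μ x g f i
      = t * ∑ i, δ i * cc L μ x g f i := by
    rw [lc_comb]; ring
  rw [hsv, hlc, real_inner_smul_right, real_inner_smul_right, norm_smul, Real.norm_eq_abs,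
    mul_pow, sq_abs]
  generalize ⟪y, sv μ x g δ⟫ = p
  generalize ⟪sv μ x g a, sv μ x g δ⟫ = r
  generalize ‖sv μ x g δ‖ = nd
  generalize (∑ i, δ i * cc L μ x g f i) = ld
  field_simp
  ring

theorem psi_continuous (y : EuclideanSpace ℝ (Fin d)) :
    Continuous (psi L μ x g f y) := by
  have hsv : Continuous (fun α : I → ℝ => sv μ x g α) := by
    unfold sv
    exact continuous_finset_sum _ fun i _ => (continuous_apply i).smul continuous_const
  unfold psi
  exact ((continuous_const.inner hsv).sub ((hsv.norm.pow 2).div_const _)).add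
    (continuous_finset_sum _ fun i _ => (continuous_apply i).mul continuous_const)

theorem exists_max [Nonempty I] (L μ : ℝ) (x g : I → EuclideanSpace ℝ (Fin d)) (f : I → ℝ)
    (y : EuclideanSpace ℝ (Fin d)) :
    ∃ a ∈ stdSimplex ℝ I, IsMaxOn (psi L μ x g f y) (stdSimplex ℝ I) a :=
  (isCompact_stdSimplex ℝ I).exists_isMaxOn
    ⟨Pi.single (Classical.arbitrary I) 1, single_mem_stdSimplex ℝ _⟩
    (psi_continuous y).continuousOn

theorem comb_mem_simplex {α β : I → ℝ} (hα : α ∈ stdSimplex ℝ I) (hβ : β ∈ stdSimplex ℝ I)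
    {t : ℝ} (ht0 : 0 ≤ t) (ht1 : t ≤ 1) :
    (fun i => α i + t * (β i - α i)) ∈ stdSimplex ℝ I := by
  constructor
  · intro i
    show 0 ≤ α i + t * (β i - α i)
    have h : α i + t * (β i - α i) = (1 - t) * α i + t * β i := by ring
    rw [h]
    exact add_nonneg (mul_nonneg (by linarith) (hα.1 i)) (mul_nonneg ht0 (hβ.1 i))
  · have h1 := hα.2
    have h2 := hβ.2
    have : ∑ i, (α i + t * (β i - α i)) = ∑ i, α i + t * (∑ i, β i - ∑ i, α i) := by
      rw [Finset.sum_add_distrib, ← Finset.mul_sum, Finset.sum_sub_distrib]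
    rw [this, h1, h2]; ring

theorem stability (hμL : μ < L) {y : EuclideanSpace ℝ (Fin d)} {a b : I → ℝ}
    (ha : a ∈ stdSimplex ℝ I) (hb : b ∈ stdSimplex ℝ I)
    (hmax : IsMaxOn (psi L μ x g f y) (stdSimplex ℝ I) a) :
    ‖sv μ x g b - sv μ x g a‖ ^ 2
      ≤ 2 * (L - μ) * (psi L μ x g f y a - psi L μ x g f y b) := by
  have hL0 : 0 < L - μ := sub_pos.mpr hμL
  set δ : I → ℝ := fun i => b i - a i with hδ
  have hsvδ : sv μ x g δ = sv μ x g b - sv μ x g a := sv_sub b a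
  set D : ℝ := ⟪y, sv μ x g δ⟫ - ⟪sv μ x g a, sv μ x g δ⟫ / (L - μ)
      + ∑ i, δ i * cc L μ x g f i with hD
  set K : ℝ := ‖sv μ x g δ‖ ^ 2 / (2 * (L - μ)) with hK
  have hK0 : 0 ≤ K := by positivity
  have key : ∀ t : ℝ, 0 ≤ t → t ≤ 1 → t * D - t ^ 2 * K ≤ 0 := by
    intro t ht0 ht1
    have h1 := psi_add_smul (x := x) (g := g) (f := f) hμL y a δ t
    have h2 : psi L μ x g f y (fun i => a i + t * δ i) ≤ psi L μ x g f y a :=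
      hmax (comb_mem_simplex ha hb ht0 ht1)
    rw [h1, ← hD, ← hK] at h2
    linarith
  have hD0 : D ≤ 0 := by
    rcases eq_or_lt_of_le hK0 with hK1 | hK1
    · have := key 1 zero_le_one le_rfl
      nlinarith
    · by_contra hD'
      push_neg at hD'
      set t : ℝ := min 1 (D / (2 * K)) with htdef
      have ht0 : 0 < t := lt_min one_pos (by positivity)
      have h3 := key t ht0.le (min_le_left _ _)
      have hle : t ≤ D / (2 * K) := min_le_right _ _
      have h4 : t * (2 * K) ≤ D := (le_div_iff₀ (by positivity)).mp hle
      nlinarith [mul_pos ht0 hD']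
  have hexp : psi L μ x g f y b = psi L μ x g f y a + D - K := by
    have h1 := psi_add_smul (x := x) (g := g) (f := f) hμL y a δ 1
    have h2 : (fun i => a i + 1 * δ i) = b := by funext i; simp [hδ]
    rw [h2, ← hD, ← hK] at h1
    rw [h1]; ring
  have e2 : 2 * (L - μ) * K = ‖sv μ x g δ‖ ^ 2 := by
    rw [hK]; field_simp
  have h5 : 2 * (L - μ) * D ≤ 0 := mul_nonpos_of_nonneg_of_nonpos (by positivity) hD0
  rw [← hsvδ]
  nlinarith
theorem cross (hμL : μ < L) {y u : EuclideanSpace ℝ (Fin d)} {a b : I → ℝ}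
    (ha : a ∈ stdSimplex ℝ I) (hb : b ∈ stdSimplex ℝ I)
    (hmaxa : IsMaxOn (psi L μ x g f y) (stdSimplex ℝ I) a)
    (hmaxb : IsMaxOn (psi L μ x g f (y + u)) (stdSimplex ℝ I) b) :
    ‖sv μ x g b - sv μ x g a‖ ≤ 2 * (L - μ) * ‖u‖ := by
  have hL0 : 0 < L - μ := sub_pos.mpr hμL
  have h1 : psi L μ x g f y a - psi L μ x g f y b ≤ ⟪u, sv μ x g b - sv μ x g a⟫ := by
    have h2 : psi L μ x g f (y + u) a ≤ psi L μ x g f (y + u) b := hmaxb ha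
    rw [psi_shift, psi_shift] at h2
    have h3 : ⟪u, sv μ x g b - sv μ x g a⟫ = ⟪u, sv μ x g b⟫ - ⟪u, sv μ x g a⟫ :=
      inner_sub_right _ _ _
    linarith
  have h3 := stability hμL ha hb hmaxa
  have h4 : ⟪u, sv μ x g b - sv μ x g a⟫ ≤ ‖u‖ * ‖sv μ x g b - sv μ x g a‖ :=
    real_inner_le_norm _ _
  rcases eq_or_lt_of_le (norm_nonneg (sv μ x g b - sv μ x g a)) with h0 | hpos
  · rw [← h0]; positivity
  · nlinarith [norm_nonneg u]

theorem vT_eq (hμL : μ < L) (y : EuclideanSpace ℝ (Fin d)) (α : I → ℝ) :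
    vT L μ x g f y α = μ / 2 * ‖y‖ ^ 2 + psi L μ x g f y α := by
  have h0 : L - μ ≠ 0 := sub_ne_zero.mpr hμL.ne'
  have hs : (∑ i, α i • (g i - μ • x i)) = sv μ x g α := rfl
  have hcc : ∀ i, (f i + 1 / (2 * (L - μ)) * ‖g i - L • x i‖ ^ 2 - L / 2 * ‖x i‖ ^ 2)
      = cc L μ x g f i := fun i => rfl
  simp only [vT, psi, hs, hcc]
  rw [norm_sub_sq_real, real_inner_smul_right, norm_smul]
  rw [show ‖(1 : ℝ) / (L - μ)‖ = |1 / (L - μ)| from Real.norm_eq_abs _]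
  rw [mul_pow, sq_abs]
  generalize ⟪y, sv μ x g α⟫ = p
  generalize ‖y‖ = ny
  generalize ‖sv μ x g α‖ = ns
  generalize (∑ i, α i * cc L μ x g f i) = lc
  field_simp
  ring

theorem VT_eq_max [Nonempty I] (hμL : μ < L) (y : EuclideanSpace ℝ (Fin d)) {a : I → ℝ}
    (ha : a ∈ stdSimplex ℝ I) (hmax : IsMaxOn (psi L μ x g f y) (stdSimplex ℝ I) a) :
    VT L μ x g f y = μ / 2 * ‖y‖ ^ 2 + psi L μ x g f y a := by
  have hg : IsGreatest (vT L μ x g f y '' stdSimplex ℝ I) (vT L μ x g f y a) := by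
    constructor
    · exact ⟨a, ha, rfl⟩
    · rintro b ⟨α, hα, rfl⟩
      rw [vT_eq hμL, vT_eq hμL]
      have h9 : psi L μ x g f y α ≤ psi L μ x g f y a := hmax hα
      linarith
  rw [VT, hg.csSup_eq, vT_eq hμL]

theorem VT_hasGradient [Nonempty I] (hμL : μ < L) (y : EuclideanSpace ℝ (Fin d)) {a : I → ℝ}
    (ha : a ∈ stdSimplex ℝ I) (hmax : IsMaxOn (psi L μ x g f y) (stdSimplex ℝ I) a) :
    HasGradientAt (VT L μ x g f) (μ • y + sv μ x g a) y := by
  have hL0 : 0 < L - μ := sub_pos.mpr hμL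
  set C : ℝ := |μ| / 2 + 2 * (L - μ) with hC
  have hC0 : 0 ≤ C := by positivity
  have hbound : ∀ z : EuclideanSpace ℝ (Fin d),
      |VT L μ x g f z - VT L μ x g f y - ⟪μ • y + sv μ x g a, z - y⟫| ≤ C * ‖z - y‖ ^ 2 := by
    intro z
    obtain ⟨b, hbΔ, hbmax⟩ := exists_max L μ x g f z
    set u : EuclideanSpace ℝ (Fin d) := z - y with hu
    have hz : y + u = z := by rw [hu]; abel
    have hVTz : VT L μ x g f z = μ / 2 * ‖z‖ ^ 2 + psi L μ x g f z b :=
      VT_eq_max hμL z hbΔ hbmax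
    have hVTy : VT L μ x g f y = μ / 2 * ‖y‖ ^ 2 + psi L μ x g f y a :=
      VT_eq_max hμL y ha hmax
    have hnz : ‖z‖ ^ 2 = ‖y‖ ^ 2 + 2 * ⟪y, u⟫ + ‖u‖ ^ 2 := by
      rw [← hz]; exact norm_add_sq_real y u
    have hinner : ⟪μ • y + sv μ x g a, u⟫ = μ * ⟪y, u⟫ + ⟪u, sv μ x g a⟫ := by
      rw [inner_add_left, real_inner_smul_left, real_inner_comm (sv μ x g a) u]
    have hbmax' : IsMaxOn (psi L μ x g f (y + u)) (stdSimplex ℝ I) b := by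
      rw [hz]; exact hbmax
    have hψz : psi L μ x g f z b = psi L μ x g f y b + ⟪u, sv μ x g b⟫ := by
      rw [← hz]; exact psi_shift y u b
    have hψza : psi L μ x g f z a = psi L μ x g f y a + ⟪u, sv μ x g a⟫ := by
      rw [← hz]; exact psi_shift y u a
    have hsubr : ⟪u, sv μ x g b - sv μ x g a⟫ = ⟪u, sv μ x g b⟫ - ⟪u, sv μ x g a⟫ :=
      inner_sub_right _ _ _
    have hlow : 0 ≤ psi L μ x g f y b - psi L μ x g f y a + ⟪u, sv μ x g b - sv μ x g a⟫ := by
      have h2 : psi L μ x g f z a ≤ psi L μ x g f z b := hbmax ha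
      rw [hψz, hψza] at h2
      rw [hsubr]; linarith
    have hup : psi L μ x g f y b - psi L μ x g f y a + ⟪u, sv μ x g b - sv μ x g a⟫
        ≤ 2 * (L - μ) * ‖u‖ ^ 2 := by
      have h5 : psi L μ x g f y b ≤ psi L μ x g f y a := hmax hbΔ
      have h6 : ⟪u, sv μ x g b - sv μ x g a⟫ ≤ ‖u‖ * ‖sv μ x g b - sv μ x g a‖ :=
        real_inner_le_norm _ _
      have h7 := cross hμL ha hbΔ hmax hbmax'
      nlinarith [norm_nonneg u, norm_nonneg (sv μ x g b - sv μ x g a)]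
    have hexpr : VT L μ x g f z - VT L μ x g f y - ⟪μ • y + sv μ x g a, u⟫
        = μ / 2 * ‖u‖ ^ 2
          + (psi L μ x g f y b - psi L μ x g f y a + ⟪u, sv μ x g b - sv μ x g a⟫) := by
      rw [hVTz, hVTy, hnz, hinner, hψz, hsubr]; ring
    rw [hexpr, abs_le]
    constructor
    · nlinarith [neg_abs_le μ, sq_nonneg ‖u‖]
    · nlinarith [le_abs_self μ, sq_nonneg ‖u‖]
  rw [hasGradientAt_iff_isLittleO, Asymptotics.isLittleO_iff]
  intro c hc
  rw [Metric.eventually_nhds_iff]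
  refine ⟨c / (C + 1), by positivity, ?_⟩
  intro z hz
  rw [dist_eq_norm] at hz
  have hb2 := hbound z
  have hnn : ‖VT L μ x g f z - VT L μ x g f y - ⟪μ • y + sv μ x g a, z - y⟫‖
      ≤ C * ‖z - y‖ ^ 2 := by rw [Real.norm_eq_abs]; exact hb2
  have ht : 0 ≤ ‖z - y‖ := norm_nonneg _
  calc ‖VT L μ x g f z - VT L μ x g f y - ⟪μ • y + sv μ x g a, z - y⟫‖
      ≤ C * ‖z - y‖ ^ 2 := hnn
    _ ≤ c * ‖z - y‖ := by
        have h8 : ‖z - y‖ * (C + 1) < c := (lt_div_iff₀ (by positivity)).mp hz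
        nlinarith [mul_le_mul_of_nonneg_left h8.le ht, sq_nonneg ‖z - y‖]

theorem span_inner_zero {d : ℕ} {T : Set (EuclideanSpace ℝ (Fin d))} {w : EuclideanSpace ℝ (Fin d)}
    (h : ∀ z ∈ T, ⟪z, w⟫ = 0) : ∀ y ∈ Submodule.span ℝ T, ⟪y, w⟫ = 0 := by
  intro y hy
  induction hy using Submodule.span_induction with
  | mem z hz => exact h z hz
  | zero => simp
  | add p q _ _ hp hq => rw [inner_add_left, hp, hq]; ring
  | smul t p _ hp => rw [real_inner_smul_left, hp]; ring

theorem move_mem_simplex {I : Type*} [Fintype I] [DecidableEq I]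
    {α : I → ℝ} (hα : α ∈ stdSimplex ℝ I) {j k : I} (hjk : j ≠ k)
    {t : ℝ} (ht0 : 0 ≤ t) (htk : t ≤ α k) :
    (fun i => α i + t * ((if i = j then (1:ℝ) else 0) - (if i = k then 1 else 0)))
      ∈ stdSimplex ℝ I := by
  constructor
  · intro i
    show 0 ≤ α i + t * ((if i = j then (1:ℝ) else 0) - (if i = k then 1 else 0))
    by_cases hij : i = j
    · subst hij
      simp [hjk]
      have := hα.1 i
      positivity
    · by_cases hik : i = k
      · subst hik
        simp [hij]
        linarith
      · simp [hij, hik]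
        exact hα.1 i
  · rw [Finset.sum_add_distrib, ← Finset.mul_sum, Finset.sum_sub_distrib]
    simp [Finset.sum_ite_eq', hα.2]

set_option maxHeartbeats 1000000 in
/-- Under conditions (i)–(iv), the strongly-convex extension `V_T` is a first-order
zero-chain on `{g_i − μ x_i}_{0 ≤ i ≤ n−1}`. -/
theorem stmt7 {d n m : ℕ} (hnm : 0 < n + m)
    {L μ : ℝ} (hL : 0 < L) (hμL : μ < L)
    (x g : Fin (n + m) → EuclideanSpace ℝ (Fin d)) (f : Fin (n + m) → ℝ)
    (hx0 : x ⟨0, hnm⟩ = 0)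
    (hortho : ∀ i j : Fin (n + m), (i : ℕ) < (j : ℕ) → (j : ℕ) < n →
      ∀ k ∈ Kset μ x g (j : ℕ),
        ⟪g i - μ • x i, g j - μ • x j⟫ = ⟪g i - μ • x i, g k - μ • x k⟫)
    (hf : ∀ j : Fin (n + m), (j : ℕ) < n → ∀ i : Fin (n + m),
      ∀ k ∈ Kset μ x g (j : ℕ),
        f j - 1 / (L - μ) * ⟪g i - μ • x i, g j - μ • x j⟫
            + 1 / (2 * (L - μ)) * ‖g j - L • x j‖ ^ 2 - L / 2 * ‖x j‖ ^ 2
          ≥ f k - 1 / (L - μ) * ⟪g i - μ • x i, g k - μ • x k⟫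
            + 1 / (2 * (L - μ)) * ‖g k - L • x k‖ ^ 2 - L / 2 * ‖x k‖ ^ 2)
    (hsep : ∀ j : Fin (n + m), (j : ℕ) < n →
      ∃ v : EuclideanSpace ℝ (Fin d), ∀ k ∈ Kset μ x g (j : ℕ),
        ⟪g j - μ • x j, v⟫ > ⟪g k - μ • x k, v⟫) :
    ∀ j : ℕ, j < n →
      ∀ y ∈ Submodule.span ℝ
          ((fun i : Fin (n + m) => g i - μ • x i) '' {i : Fin (n + m) | (i : ℕ) < j}),
        gradient (VT L μ x g f) y ∈ Submodule.span ℝ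
          ((fun i : Fin (n + m) => g i - μ • x i) '' {i : Fin (n + m) | (i : ℕ) ≤ j}) := by
  haveI : Nonempty (Fin (n + m)) := ⟨⟨0, hnm⟩⟩
  have hL0 : 0 < L - μ := sub_pos.mpr hμL
  intro j hj y hy
  obtain ⟨a, haΔ, hamax⟩ := exists_max L μ x g f y
  have hgrad := VT_hasGradient hμL y haΔ hamax
  rw [hgrad.gradient]
  set S := Submodule.span ℝ
      ((fun i : Fin (n + m) => g i - μ • x i) '' {i : Fin (n + m) | (i : ℕ) ≤ j}) with hSdef
  refine Submodule.add_mem _ ?_ ?_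
  · have hsub : ((fun i : Fin (n + m) => g i - μ • x i) '' {i : Fin (n + m) | (i : ℕ) < j})
        ⊆ ((fun i : Fin (n + m) => g i - μ • x i) '' {i : Fin (n + m) | (i : ℕ) ≤ j}) :=
      Set.image_mono (fun i (hi : (i : ℕ) < j) => le_of_lt hi)
    exact Submodule.smul_mem _ μ (Submodule.span_mono hsub hy)
  · set jj : Fin (n + m) := ⟨j, lt_of_lt_of_le hj (Nat.le_add_right n m)⟩ with hjj
    obtain ⟨v, hv⟩ := hsep jj hj
    -- key claim: maximizers at tilted points put no mass on K_j
    have hKey : ∀ ε : ℝ, 0 < ε → ∀ b ∈ stdSimplex ℝ (Fin (n + m)),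
        IsMaxOn (psi L μ x g f (y + ε • v)) (stdSimplex ℝ (Fin (n + m))) b →
        ∀ k ∈ Kset μ x g j, b k = 0 := by
      intro ε hε b hbΔ hbmax k hk
      by_contra hbk0
      have hbk : 0 < b k := (hbΔ.1 k).lt_of_ne (Ne.symm hbk0)
      have hjS : g jj - μ • x jj ∈ Submodule.span ℝ
          ((fun i : Fin (n + m) => g i - μ • x i) '' {i : Fin (n + m) | (i : ℕ) ≤ j}) :=
        Submodule.subset_span ⟨jj, by simp [hjj], rfl⟩
      have hjk : jj ≠ k := by
        intro h
        exact hk (h ▸ hjS)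
      set w : EuclideanSpace ℝ (Fin d) := (g jj - μ • x jj) - (g k - μ • x k) with hwdef
      set δ : Fin (n + m) → ℝ :=
        fun i => (if i = jj then (1:ℝ) else 0) - (if i = k then 1 else 0) with hδdef
      have hδmem : ∀ tt : ℝ, tt ≤ b k → 0 ≤ tt →
          (fun i => b i + tt * δ i) ∈ stdSimplex ℝ (Fin (n + m)) :=
        fun tt h1 h2 => move_mem_simplex hbΔ hjk h2 h1
      have hsvδ : sv μ x g δ = w := by
        have h1 : sv μ x g δ = sv μ x g (fun i => if i = jj then (1:ℝ) else 0)
            - sv μ x g (fun i => if i = k then (1:ℝ) else 0) :=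
          sv_sub _ _
        rw [h1, sv_single, sv_single]
      have hlcδ : ∑ i, δ i * cc L μ x g f i = cc L μ x g f jj - cc L μ x g f k := by
        have h1 : ∑ i, δ i * cc L μ x g f i
            = ∑ i, (if i = jj then (1:ℝ) else 0) * cc L μ x g f i
              - ∑ i, (if i = k then (1:ℝ) else 0) * cc L μ x g f i :=
          lc_sub _ _ _
        rw [h1, lc_single, lc_single]
      have hyw : ⟪y, w⟫ = 0 := by
        refine span_inner_zero ?_ y hy
        rintro z ⟨i, hi, rfl⟩
        have h1 := hortho i jj hi hj k hk
        rw [hwdef, inner_sub_right, h1]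
        ring
      have hvw : 0 < ⟪v, w⟫ := by
        have h1 := hv k hk
        rw [hwdef, inner_sub_right, real_inner_comm (g jj - μ • x jj) v,
          real_inner_comm (g k - μ • x k) v]
        linarith
      have hy'w : ⟪y + ε • v, w⟫ = ε * ⟪v, w⟫ := by
        rw [inner_add_left, hyw, real_inner_smul_left]
        ring
      have hper : ∀ i : Fin (n + m),
          ⟪g i - μ • x i, w⟫ / (L - μ) ≤ cc L μ x g f jj - cc L μ x g f k := by
        intro i
        have h1 := hf jj hj i k hk
        have h2 : ⟪g i - μ • x i, w⟫
            = ⟪g i - μ • x i, g jj - μ • x jj⟫ - ⟪g i - μ • x i, g k - μ • x k⟫ := by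
          rw [hwdef, inner_sub_right]
        have e : ∀ q : ℝ, q / (L - μ) = 1 / (L - μ) * q := fun q => by ring
        rw [h2, e]
        simp only [cc]
        rw [ge_iff_le] at h1
        have := sub_ne_zero.mpr hμL.ne'
        rw [mul_sub]
        linarith
      have hsw : ⟪sv μ x g b, w⟫ / (L - μ) ≤ cc L μ x g f jj - cc L μ x g f k := by
        have hsum : ⟪sv μ x g b, w⟫ = ∑ i, b i * ⟪g i - μ • x i, w⟫ := by
          rw [sv, sum_inner]
          exact Finset.sum_congr rfl fun i _ => real_inner_smul_left _ _ _
        rw [hsum]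
        calc (∑ i, b i * ⟪g i - μ • x i, w⟫) / (L - μ)
            = ∑ i, b i * (⟪g i - μ • x i, w⟫ / (L - μ)) := by
              rw [Finset.sum_div]
              exact Finset.sum_congr rfl fun i _ => by ring
          _ ≤ ∑ i, b i * (cc L μ x g f jj - cc L μ x g f k) :=
              Finset.sum_le_sum fun i _ => mul_le_mul_of_nonneg_left (hper i) (hbΔ.1 i)
          _ = cc L μ x g f jj - cc L μ x g f k := by
              rw [← Finset.sum_mul, hbΔ.2, one_mul]
      clear_value w δ
      obtain ⟨B, hBdef⟩ : ∃ B : ℝ, B = ⟪y + ε • v, w⟫ - ⟪sv μ x g b, w⟫ / (L - μ)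
          + (cc L μ x g f jj - cc L μ x g f k) := ⟨_, rfl⟩
      have hB : 0 < B := by
        rw [hBdef, hy'w]
        have := mul_pos hε hvw
        linarith
      obtain ⟨Cw, hCwdef⟩ : ∃ Cw : ℝ, Cw = ‖w‖ ^ 2 / (2 * (L - μ)) := ⟨_, rfl⟩
      have hCw0 : 0 ≤ Cw := by rw [hCwdef]; positivity
      obtain ⟨t, htdef⟩ : ∃ t : ℝ, t = min (b k) (B / (2 * (Cw + 1))) := ⟨_, rfl⟩
      have ht0 : 0 < t := by rw [htdef]; exact lt_min hbk (by positivity)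
      have htk : t ≤ b k := by rw [htdef]; exact min_le_left _ _
      have htB : t * (Cw + 1) ≤ B / 2 := by
        have h1 : t ≤ B / (2 * (Cw + 1)) := by rw [htdef]; exact min_le_right _ _
        have h2 : t * (2 * (Cw + 1)) ≤ B := (le_div_iff₀ (by positivity)).mp h1
        nlinarith
      have hβ' : (fun i => b i + t * δ i) ∈ stdSimplex ℝ (Fin (n + m)) := hδmem t htk ht0.le
      have h1 := psi_add_smul (x := x) (g := g) (f := f) hμL (y + ε • v) b δ t
      rw [hsvδ, hlcδ, ← hBdef, ← hCwdef] at h1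
      have h2 : psi L μ x g f (y + ε • v) (fun i => b i + t * δ i)
          ≤ psi L μ x g f (y + ε • v) b := hbmax hβ'
      rw [h1] at h2
      nlinarith [mul_pos ht0 ht0, mul_pos ht0 hB, mul_le_mul_of_nonneg_left htB ht0.le]
    -- limit argument
    have hclosed : IsClosed (S : Set (EuclideanSpace ℝ (Fin d))) :=
      S.closed_of_finiteDimensional
    suffices hcl : sv μ x g a ∈ closure (S : Set (EuclideanSpace ℝ (Fin d))) by
      rwa [hclosed.closure_eq] at hcl
    rw [Metric.mem_closure_iff]
    intro ε hε
    obtain ⟨ε', hε'0, hε'lt⟩ : ∃ e : ℝ, 0 < e ∧ 2 * (L - μ) * (e * ‖v‖) < ε := by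
      refine ⟨ε / (2 * (L - μ) * ‖v‖ + 1), by positivity, ?_⟩
      have hD1 : 0 < 2 * (L - μ) * ‖v‖ + 1 := by positivity
      have heq : 2 * (L - μ) * (ε / (2 * (L - μ) * ‖v‖ + 1) * ‖v‖)
          = ε * (2 * (L - μ) * ‖v‖) / (2 * (L - μ) * ‖v‖ + 1) := by ring
      rw [heq, div_lt_iff₀ hD1]
      nlinarith [norm_nonneg v]
    obtain ⟨b, hbΔ, hbmax⟩ := exists_max L μ x g f (y + ε' • v)
    refine ⟨sv μ x g b, ?_, ?_⟩
    · apply Submodule.sum_mem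
      intro i _
      by_cases hik : i ∈ Kset μ x g j
      · rw [hKey ε' hε'0 b hbΔ hbmax i hik, zero_smul]
        exact S.zero_mem
      · have hmem : g i - μ • x i ∈ S := by
          simp only [Kset, Set.mem_setOf_eq, not_not] at hik
          exact hik
        exact S.smul_mem _ hmem
    · rw [dist_eq_norm]
      have h7 := cross hμL haΔ hbΔ hamax hbmax
      have hnorm : ‖ε' • v‖ = ε' * ‖v‖ := by
        rw [norm_smul, Real.norm_eq_abs, abs_of_pos hε'0]
      calc ‖sv μ x g a - sv μ x g b‖ = ‖sv μ x g b - sv μ x g a‖ := norm_sub_rev _ _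
        _ ≤ 2 * (L - μ) * (ε' * ‖v‖) := by rw [← hnorm]; exact h7
        _ < ε := hε'lt
end Aux
end

section
/- Suppose 0 ≤ μ < L, g_* = 0, and for every j ∈ I*_N one has (1/(2L))‖g_j‖² + (μL/(2(L−μ)))‖x_* − x_j + (1/L)g_j‖² ≤ f_* − f_j − ⟨g_j, x_* − x_j⟩. Then V_𝒯(x_*) = f_*, ∇V_𝒯(x_*) = 0, and x_* is a global minimizer of V_𝒯, i.e., V_𝒯(y) ≥ f_* for all y ∈ ℝ^d. -/
open scoped RealInnerProductSpace BigOperators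

private lemma norm_smul_sq {F : Type*} [NormedAddCommGroup F] [InnerProductSpace ℝ F]
    (c : ℝ) (v : F) : ‖c • v‖ ^ 2 = c ^ 2 * ‖v‖ ^ 2 := by
  rw [norm_smul, mul_pow, Real.norm_eq_abs, sq_abs]

private lemma vT_bddAbove {d : ℕ} {I : Type*} [Fintype I] (L μ : ℝ) (hμL : μ < L)
    (x g : I → EuclideanSpace ℝ (Fin d)) (f : I → ℝ) (y : EuclideanSpace ℝ (Fin d)) :
    BddAbove (vT L μ x g f y '' stdSimplex ℝ I) := by
  refine ⟨L / 2 * ‖y‖ ^ 2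
    + ∑ i, |f i + 1 / (2 * (L - μ)) * ‖g i - L • x i‖ ^ 2 - L / 2 * ‖x i‖ ^ 2|, ?_⟩
  rintro v ⟨α, ⟨hα0, hα1⟩, rfl⟩
  have h1 : ∀ i, α i ≤ 1 := by
    intro i
    calc α i ≤ ∑ j, α j := Finset.single_le_sum (fun j _ => hα0 j) (Finset.mem_univ i)
      _ = 1 := hα1
  have h2 : ∑ i, α i * (f i + 1 / (2 * (L - μ)) * ‖g i - L • x i‖ ^ 2 - L / 2 * ‖x i‖ ^ 2)
      ≤ ∑ i, |f i + 1 / (2 * (L - μ)) * ‖g i - L • x i‖ ^ 2 - L / 2 * ‖x i‖ ^ 2| := by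
    refine Finset.sum_le_sum fun i _ => ?_
    calc α i * _ ≤ |α i * _| := le_abs_self _
      _ = α i * |_| := by rw [abs_mul, abs_of_nonneg (hα0 i)]
      _ ≤ 1 * |_| := mul_le_mul_of_nonneg_right (h1 i) (abs_nonneg _)
      _ = _ := one_mul _
  have h3 : 0 ≤ (L - μ) / 2 * ‖y - (1 / (L - μ)) • ∑ i, α i • (g i - μ • x i)‖ ^ 2 :=
    mul_nonneg (by linarith) (sq_nonneg _)
  unfold vT
  linarith

private lemma scalar1 (L μ a b p fs : ℝ) (hμ : 0 ≤ μ) (he : 0 < L - μ)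
    (h0 : 0 ≤ a - 2 * p + b) :
    fs ≤ L / 2 * a
      - (L - μ) / 2 * (a + 2 * (μ / (L - μ) * p) + (μ / (L - μ)) ^ 2 * b)
      + (fs + 1 / (2 * (L - μ)) * (L ^ 2 * b) - L / 2 * b) := by
  have key : L / 2 * a
      - (L - μ) / 2 * (a + 2 * (μ / (L - μ) * p) + (μ / (L - μ)) ^ 2 * b)
      + (fs + 1 / (2 * (L - μ)) * (L ^ 2 * b) - L / 2 * b)
      = fs + μ / 2 * (a - 2 * p + b) := by
    field_simp
    ring
  nlinarith [mul_nonneg hμ h0]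

private lemma vT_delta {d : ℕ} {I : Type*} [Fintype I] [DecidableEq I] (L μ : ℝ)
    (hμ : 0 ≤ μ) (hμL : μ < L)
    (x g : I → EuclideanSpace ℝ (Fin d)) (f : I → ℝ) (i₀ : I) (hg : g i₀ = 0)
    (y : EuclideanSpace ℝ (Fin d)) :
    f i₀ ≤ vT L μ x g f y (fun i => if i = i₀ then 1 else 0) := by
  have he : (0:ℝ) < L - μ := by linarith
  unfold vT
  have hsum1 : ∑ i, (if i = i₀ then (1:ℝ) else 0) • (g i - μ • x i) = -(μ • x i₀) := by
    simp [ite_smul, Finset.sum_ite_eq', hg]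
  have hsum2 : ∑ i, (if i = i₀ then (1:ℝ) else 0)
        * (f i + 1 / (2 * (L - μ)) * ‖g i - L • x i‖ ^ 2 - L / 2 * ‖x i‖ ^ 2)
      = f i₀ + 1 / (2 * (L - μ)) * (L ^ 2 * ‖x i₀‖ ^ 2) - L / 2 * ‖x i₀‖ ^ 2 := by
    simp [ite_mul, Finset.sum_ite_eq', hg, norm_smul_sq]
  rw [hsum1, hsum2]
  have hvec : y - (1 / (L - μ)) • (-(μ • x i₀)) = y + (μ / (L - μ)) • x i₀ := by
    rw [smul_neg, smul_smul, sub_neg_eq_add]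
    congr 2
    field_simp
  rw [hvec, norm_add_sq_real, real_inner_smul_right, norm_smul_sq]
  have h0 : (0:ℝ) ≤ ‖y - x i₀‖ ^ 2 := sq_nonneg _
  rw [norm_sub_sq_real] at h0
  exact scalar1 L μ _ _ _ _ hμ he h0

private lemma scalar2 (L μ A B S P Q R fi fs : ℝ) (hL : 0 < L) (he : 0 < L - μ)
    (hi : 1 / (2 * L) * A
        + μ * L / (2 * (L - μ)) * ((S - 2 * R + B) + 2 * (1 / L * (P - Q)) + (1 / L) ^ 2 * A)
        ≤ fs - fi - (P - Q)) :
    2 * (L - μ) * (fi + 1 / (2 * (L - μ)) * (A - 2 * (L * Q) + L ^ 2 * B) - L / 2 * B)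
      ≤ 2 * (L - μ) * fs - 2 * L * (P - μ * R) - μ * L * S := by
  have h3 : 0 ≤ 2 * (L - μ) * ((fs - fi - (P - Q)) - (1 / (2 * L) * A
      + μ * L / (2 * (L - μ)) * ((S - 2 * R + B) + 2 * (1 / L * (P - Q)) + (1 / L) ^ 2 * A))) :=
    mul_nonneg (by linarith) (by linarith)
  have key : 2 * (L - μ) * ((fs - fi - (P - Q)) - (1 / (2 * L) * A
      + μ * L / (2 * (L - μ)) * ((S - 2 * R + B) + 2 * (1 / L * (P - Q)) + (1 / L) ^ 2 * A)))
      = (2 * (L - μ) * fs - 2 * L * (P - μ * R) - μ * L * S)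
        - 2 * (L - μ) * (fi + 1 / (2 * (L - μ)) * (A - 2 * (L * Q) + L ^ 2 * B) - L / 2 * B) := by
    field_simp
    ring
  linarith

private lemma scalar3 (L μ S W C Sc fs : ℝ) (he : 0 < L - μ)
    (h1 : 2 * (L - μ) * Sc ≤ (2 * (L - μ) * fs - μ * L * S) * 1 - 2 * L * W)
    (h2 : 0 ≤ C + 2 * (μ * W) + μ ^ 2 * S) :
    μ / 2 * S + W - C / (2 * (L - μ)) + Sc ≤ fs := by
  refine le_of_mul_le_mul_left ?_ (show (0:ℝ) < 2 * (L - μ) by linarith)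
  calc 2 * (L - μ) * (μ / 2 * S + W - C / (2 * (L - μ)) + Sc)
      = (L - μ) * μ * S + 2 * (L - μ) * W - C + 2 * (L - μ) * Sc := by
        field_simp
    _ ≤ 2 * (L - μ) * fs := by nlinarith [h1, h2]

private lemma vT_le_main {d : ℕ} {I : Type*} [Fintype I] (L μ : ℝ)
    (hL : 0 < L) (hμ : 0 ≤ μ) (hμL : μ < L)
    (x g : I → EuclideanSpace ℝ (Fin d)) (f : I → ℝ) (i₀ : I) (hg : g i₀ = 0)
    (hinterp : ∀ j,
      1 / (2 * L) * ‖g j‖ ^ 2 + μ * L / (2 * (L - μ)) * ‖x i₀ - x j + (1 / L) • g j‖ ^ 2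
        ≤ f i₀ - f j - ⟪g j, x i₀ - x j⟫)
    (α : I → ℝ) (hα0 : ∀ i, 0 ≤ α i) (hα1 : ∑ i, α i = 1) :
    vT L μ x g f (x i₀) α ≤ f i₀ := by
  have he : (0:ℝ) < L - μ := by linarith
  set c : EuclideanSpace ℝ (Fin d) := ∑ i, α i • (g i - μ • x i) with hc
  have hW : ⟪x i₀, c⟫ = ∑ i, α i * ⟪x i₀, g i - μ • x i⟫ := by
    rw [hc, inner_sum]
    exact Finset.sum_congr rfl fun i _ => real_inner_smul_right _ _ _
  -- expansion of vT at x i₀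
  have hv : vT L μ x g f (x i₀) α
      = μ / 2 * ‖x i₀‖ ^ 2 + ⟪x i₀, c⟫ - ‖c‖ ^ 2 / (2 * (L - μ))
        + ∑ i, α i * (f i + 1 / (2 * (L - μ)) * ‖g i - L • x i‖ ^ 2 - L / 2 * ‖x i‖ ^ 2) := by
    unfold vT
    rw [← hc, norm_sub_sq_real, real_inner_smul_right, norm_smul_sq]
    field_simp
    ring
  rw [hv]
  -- per-index inequality, summed
  have hsum : ∑ i, α i * (2 * (L - μ)
        * (f i + 1 / (2 * (L - μ)) * ‖g i - L • x i‖ ^ 2 - L / 2 * ‖x i‖ ^ 2))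
      ≤ ∑ i, α i * (2 * (L - μ) * f i₀ - 2 * L * ⟪x i₀, g i - μ • x i⟫
          - μ * L * ‖x i₀‖ ^ 2) := by
    refine Finset.sum_le_sum fun i _ => mul_le_mul_of_nonneg_left ?_ (hα0 i)
    have exp3 : ‖g i - L • x i‖ ^ 2
        = ‖g i‖ ^ 2 - 2 * (L * ⟪x i, g i⟫) + L ^ 2 * ‖x i‖ ^ 2 := by
      rw [norm_sub_sq_real, real_inner_smul_right, norm_smul_sq,
        real_inner_comm (g i) (x i)]
    have exp4 : ⟪x i₀, g i - μ • x i⟫ = ⟪x i₀, g i⟫ - μ * ⟪x i₀, x i⟫ := by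
      rw [inner_sub_right, real_inner_smul_right]
    rw [exp3, exp4]
    have hi := hinterp i
    have exp1 : ‖x i₀ - x i + (1 / L) • g i‖ ^ 2
        = (‖x i₀‖ ^ 2 - 2 * ⟪x i₀, x i⟫ + ‖x i‖ ^ 2)
          + 2 * (1 / L * (⟪x i₀, g i⟫ - ⟪x i, g i⟫)) + (1 / L) ^ 2 * ‖g i‖ ^ 2 := by
      rw [norm_add_sq_real, norm_sub_sq_real, real_inner_smul_right, inner_sub_left,
        norm_smul_sq]
    have exp2 : ⟪g i, x i₀ - x i⟫ = ⟪x i₀, g i⟫ - ⟪x i, g i⟫ := by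
      rw [inner_sub_right, real_inner_comm (g i) (x i₀), real_inner_comm (g i) (x i)]
    rw [exp1, exp2] at hi
    exact scalar2 L μ _ _ _ _ _ _ _ _ hL he hi
  have hsplit : ∀ i, α i * (2 * (L - μ) * f i₀ - 2 * L * ⟪x i₀, g i - μ • x i⟫
        - μ * L * ‖x i₀‖ ^ 2)
      = (2 * (L - μ) * f i₀ - μ * L * ‖x i₀‖ ^ 2) * α i
        - 2 * L * (α i * ⟪x i₀, g i - μ • x i⟫) := fun i => by ring
  rw [Finset.sum_congr rfl fun i _ => hsplit i, Finset.sum_sub_distrib,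
    ← Finset.mul_sum, ← Finset.mul_sum, hα1, ← hW] at hsum
  have hfactor : ∑ i, α i * (2 * (L - μ)
        * (f i + 1 / (2 * (L - μ)) * ‖g i - L • x i‖ ^ 2 - L / 2 * ‖x i‖ ^ 2))
      = 2 * (L - μ) * ∑ i, α i
          * (f i + 1 / (2 * (L - μ)) * ‖g i - L • x i‖ ^ 2 - L / 2 * ‖x i‖ ^ 2) := by
    rw [Finset.mul_sum]
    exact Finset.sum_congr rfl fun i _ => by ring
  rw [hfactor] at hsum
  have h2 : (0:ℝ) ≤ ‖c + μ • x i₀‖ ^ 2 := sq_nonneg _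
  rw [norm_add_sq_real, real_inner_smul_right, norm_smul_sq,
    real_inner_comm (x i₀) c] at h2
  exact scalar3 L μ _ _ _ _ _ he hsum h2

/-- With index set `I*_N = {0, …, N, *}` (modelled as `Option (Fin (N+1))`, where `none`
plays the role of `*`): if `0 ≤ μ < L`, `g_* = 0` and the interpolation conditions with
respect to `*` hold, then `V_T(x_*) = f_*`, `∇V_T(x_*) = 0`, and `x_*` is a global
minimizer of `V_T`. -/
theorem stmt8 {d N : ℕ} {L μ : ℝ} (hL : 0 < L) (hμ : 0 ≤ μ) (hμL : μ < L)
    (x g : Option (Fin (N + 1)) → EuclideanSpace ℝ (Fin d)) (f : Option (Fin (N + 1)) → ℝ)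
    (hgstar : g none = 0)
    (hinterp : ∀ j : Option (Fin (N + 1)),
      1 / (2 * L) * ‖g j‖ ^ 2 + μ * L / (2 * (L - μ)) * ‖x none - x j + (1 / L) • g j‖ ^ 2
        ≤ f none - f j - ⟪g j, x none - x j⟫) :
    VT L μ x g f (x none) = f none ∧
    gradient (VT L μ x g f) (x none) = 0 ∧
    ∀ y, f none ≤ VT L μ x g f y := by
  have hδ : (fun i => if i = none then (1:ℝ) else 0)
      ∈ stdSimplex ℝ (Option (Fin (N + 1))) := by
    constructor
    · intro i; dsimp only; split <;> norm_num
    · simp [Finset.sum_ite_eq']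
  have hbdd : ∀ y, BddAbove (vT L μ x g f y '' stdSimplex ℝ (Option (Fin (N + 1)))) :=
    fun y => vT_bddAbove L μ hμL x g f y
  have hlow : ∀ y, f none ≤ VT L μ x g f y := fun y =>
    le_trans (vT_delta L μ hμ hμL x g f none hgstar y)
      (le_csSup (hbdd y) (Set.mem_image_of_mem _ hδ))
  have hup : VT L μ x g f (x none) ≤ f none := by
    refine csSup_le ⟨_, Set.mem_image_of_mem _ hδ⟩ ?_
    rintro v ⟨α, hα, rfl⟩
    exact vT_le_main L μ hL hμ hμL x g f none hgstar hinterp α hα.1 hα.2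
  have heq : VT L μ x g f (x none) = f none := le_antisymm hup (hlow _)
  refine ⟨heq, ?_, hlow⟩
  have hmin : IsLocalMin (VT L μ x g f) (x none) :=
    Filter.Eventually.of_forall fun y => heq ▸ hlow y
  have hfd := hmin.fderiv_eq_zero
  unfold gradient
  rw [hfd]
  simp
end

section
/- Suppose 0 < μ < L and: (i) x_0 = 0 and g_* = 0; (ii) for every j ∈ I*_N, (1/(2L))‖g_j‖² + (μL/(2(L−μ)))‖x_* − x_j + (1/L)g_j‖² ≤ f_* − f_j − ⟨g_j, x_* − x_j⟩; (iii) ⟨x_N − x_*, g_i − μ x_i⟩ = 0 for all 0 ≤ i ≤ N−1; and (iv) ⟨x_N − x_*, x_N⟩ = 0. Then x_* is the unique global minimizer of V_𝒯, and for every y ∈ span{g_0 − μ x_0, …, g_{N−1} − μ x_{N−1}} one has ‖y − x_*‖ ≥ ‖x_N − x_*‖. -/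
open scoped RealInnerProductSpace BigOperators

section Aux
variable {E : Type*} [NormedAddCommGroup E] [InnerProductSpace ℝ E]

lemma aux_id1 {L μ : ℝ} (hμL : μ < L) (z S : E) :
    L / 2 * ‖z‖ ^ 2 - (L - μ) / 2 * ‖z - (1 / (L - μ)) • S‖ ^ 2
      = μ/2*‖z‖^2 + ⟪z,S⟫ - 1/(2*(L-μ))*‖S‖^2 := by
  have h : L - μ ≠ 0 := sub_ne_zero.mpr hμL.ne'
  rw [norm_sub_sq_real, real_inner_smul_right, norm_smul]
  simp only [mul_pow, sq_abs, Real.norm_eq_abs]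
  field_simp; ring

lemma aux_id3 {L μ : ℝ} (hμL : μ < L) (z S : E) :
    μ/2*‖z‖^2 + ⟪z,S⟫ - 1/(2*(L-μ))*‖S‖^2
      = μ*L/(2*(L-μ))*‖z‖^2 + L/(L-μ)*⟪z,S⟫ - 1/(2*(L-μ))*‖μ•z + S‖^2 := by
  have h : L - μ ≠ 0 := sub_ne_zero.mpr hμL.ne'
  rw [norm_add_sq_real, real_inner_smul_left, norm_smul]
  simp only [mul_pow, sq_abs, Real.norm_eq_abs]
  field_simp; ring

lemma aux_id2 {L μ : ℝ} (hL : 0 < L) (hμL : μ < L) (z xx gg : E) :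
    1/(2*(L-μ))*‖gg - L•xx‖^2 - L/2*‖xx‖^2 + μ*L/(2*(L-μ))*‖z‖^2 + L/(L-μ)*⟪z, gg - μ•xx⟫
      = ⟪gg, z - xx⟫ + 1/(2*L)*‖gg‖^2 + μ*L/(2*(L-μ))*‖z - xx + (1/L)•gg‖^2 := by
  have h : L - μ ≠ 0 := sub_ne_zero.mpr hμL.ne'
  have hL' : L ≠ 0 := hL.ne'
  rw [norm_sub_sq_real, norm_add_sq_real, norm_sub_sq_real, real_inner_smul_right,
    real_inner_smul_right, inner_sub_left, inner_sub_right, inner_sub_right,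
    real_inner_smul_right, norm_smul, norm_smul]
  simp only [mul_pow, sq_abs, Real.norm_eq_abs]
  rw [real_inner_comm gg z, real_inner_comm gg xx]
  field_simp; ring

end Aux


/-- With index set `I*_N = {0, …, N, *}` (modelled as `Option (Fin (N+1))`, where `none`
plays the role of `*` and `Fin.last N` the role of `N`): if `0 < μ < L` and hypotheses
(i)–(iv) hold, then `x_*` is the unique global minimizer of `V_T`, and every point `y` in
the span of `{g_0 − μx_0, …, g_{N−1} − μx_{N−1}}` satisfies `‖y − x_*‖ ≥ ‖x_N − x_*‖`. -/
theorem stmt10 {d N : ℕ} (hN : 1 ≤ N) {L μ : ℝ} (hL : 0 < L) (hμ : 0 < μ) (hμL : μ < L)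
    (x g : Option (Fin (N + 1)) → EuclideanSpace ℝ (Fin d)) (f : Option (Fin (N + 1)) → ℝ)
    (hx0 : x (some 0) = 0) (hgstar : g none = 0)
    (hinterp : ∀ j : Option (Fin (N + 1)),
      1 / (2 * L) * ‖g j‖ ^ 2 + μ * L / (2 * (L - μ)) * ‖x none - x j + (1 / L) • g j‖ ^ 2
        ≤ f none - f j - ⟪g j, x none - x j⟫)
    (horth : ∀ i : Fin (N + 1), (i : ℕ) < N →
      ⟪x (some (Fin.last N)) - x none, g (some i) - μ • x (some i)⟫ = 0)
    (horthx : ⟪x (some (Fin.last N)) - x none, x (some (Fin.last N))⟫ = 0) :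
    (∀ y, VT L μ x g f (x none) ≤ VT L μ x g f y) ∧
    (∀ y, (∀ z, VT L μ x g f y ≤ VT L μ x g f z) → y = x none) ∧
    ∀ y ∈ Submodule.span ℝ
        ((fun i : Fin (N + 1) => g (some i) - μ • x (some i)) ''
          {i : Fin (N + 1) | (i : ℕ) < N}),
      ‖x (some (Fin.last N)) - x none‖ ≤ ‖y - x none‖ := by
  have hLμ : (0:ℝ) < L - μ := sub_pos.mpr hμL
  set z : EuclideanSpace ℝ (Fin d) := x none with hz
  set c : Option (Fin (N + 1)) → ℝ :=
    fun i => f i + 1 / (2 * (L - μ)) * ‖g i - L • x i‖ ^ 2 - L / 2 * ‖x i‖ ^ 2 with hc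
  -- the vertex weight at *
  set δ : Option (Fin (N + 1)) → ℝ := fun i => if i = none then 1 else 0 with hδ
  have hδmem : δ ∈ stdSimplex ℝ (Option (Fin (N + 1))) := by
    constructor
    · intro i; by_cases h : i = none <;> simp [hδ, h]
    · simp [hδ]
  -- reduction of sums over δ
  have s1 : ∑ i, δ i • (g i - μ • x i) = -(μ • z) := by
    simp [hδ, ite_smul, hgstar, ← hz]
  have s2 : ∑ i, δ i * c i = c none := by
    simp [hδ, ite_mul]
  -- value of vT at the vertex δ
  have vδ : ∀ y, vT L μ x g f y δ = f none + μ/2*‖y - z‖^2 := by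
    intro y
    simp only [vT, ← hc, s1, s2]
    rw [aux_id1 hμL y (-(μ • z))]
    have e : ⟪y, -(μ•z)⟫ = -(μ*⟪y,z⟫) := by
      rw [inner_neg_right, real_inner_smul_right]
    have e' : ‖-(μ•z)‖^2 = μ^2*‖z‖^2 := by
      rw [norm_neg, norm_smul]; simp [mul_pow, sq_abs]
    have e2 : ‖y - z‖^2 = ‖y‖^2 - 2*⟪y,z⟫ + ‖z‖^2 := norm_sub_sq_real y z
    have e3 : ‖g none - L • x none‖^2 = L^2*‖z‖^2 := by
      rw [hgstar, zero_sub, norm_neg, norm_smul, ← hz]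
      simp [mul_pow, sq_abs]
    rw [show (∑ i, δ i * (f i + 1 / (2 * (L - μ)) * ‖g i - L • x i‖ ^ 2 - L / 2 * ‖x i‖ ^ 2)) = c none from s2]
    rw [← hz] at e3
    simp only [hc, ← hz, e3]
    rw [e, e', e2]
    field_simp
    ring
  -- key inequality: vT at x none is at most f none
  have key : ∀ α ∈ stdSimplex ℝ (Option (Fin (N + 1))), vT L μ x g f z α ≤ f none := by
    intro α hα
    set S : EuclideanSpace ℝ (Fin d) := ∑ i, α i • (g i - μ • x i) with hS
    have e1 : vT L μ x g f z α
        = μ*L/(2*(L-μ))*‖z‖^2 + L/(L-μ)*⟪z,S⟫ - 1/(2*(L-μ))*‖μ•z + S‖^2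
          + ∑ i, α i * c i := by
      simp only [vT, ← hc, ← hS]
      rw [aux_id1 hμL z S, aux_id3 hμL z S]
    have e2 : ⟪z,S⟫ = ∑ i, α i * ⟪z, g i - μ • x i⟫ := by
      rw [hS, inner_sum]
      exact Finset.sum_congr rfl fun i _ => real_inner_smul_right _ _ _
    have hKconst : ∀ K : ℝ, K = ∑ i : Option (Fin (N+1)), α i * K := by
      intro K; rw [← Finset.sum_mul, hα.2, one_mul]
    have e3 : ∀ i, c i + (μ*L/(2*(L-μ))*‖z‖^2 + L/(L-μ)*⟪z, g i - μ • x i⟫) ≤ f none := by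
      intro i
      have h2 := aux_id2 hL hμL z (x i) (g i)
      have h3 := hinterp i
      simp only [hc]
      linarith
    have hnn : 0 ≤ 1/(2*(L-μ))*‖μ•z + S‖^2 := by positivity
    calc vT L μ x g f z α
        = μ*L/(2*(L-μ))*‖z‖^2 + L/(L-μ)*⟪z,S⟫ - 1/(2*(L-μ))*‖μ•z + S‖^2
          + ∑ i, α i * c i := e1
      _ ≤ μ*L/(2*(L-μ))*‖z‖^2 + L/(L-μ)*⟪z,S⟫ + ∑ i, α i * c i := by linarith
      _ = ∑ i, α i * (c i + (μ*L/(2*(L-μ))*‖z‖^2 + L/(L-μ)*⟪z, g i - μ • x i⟫)) := by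
          have e4 : ∑ i, α i * (c i + (μ*L/(2*(L-μ))*‖z‖^2 + L/(L-μ)*⟪z, g i - μ • x i⟫))
              = ∑ i, (α i * (μ*L/(2*(L-μ))*‖z‖^2)
                  + (α i * c i + L/(L-μ)*(α i * ⟪z, g i - μ • x i⟫))) :=
            Finset.sum_congr rfl fun i _ => by ring
          rw [e4, Finset.sum_add_distrib, Finset.sum_add_distrib, ← Finset.sum_mul, hα.2,
            one_mul, e2, Finset.mul_sum]
          ring
      _ ≤ ∑ i, α i * f none :=
          Finset.sum_le_sum fun i _ => mul_le_mul_of_nonneg_left (e3 i) (hα.1 i)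
      _ = f none := by rw [← Finset.sum_mul, hα.2, one_mul]
  -- boundedness of the image set
  have hbdd : ∀ y, BddAbove (vT L μ x g f y '' stdSimplex ℝ (Option (Fin (N + 1)))) := by
    intro y
    refine ⟨L/2*‖y‖^2 + ∑ i, |c i|, ?_⟩
    rintro b ⟨α, hα, rfl⟩
    have h1 : ∑ i, α i * c i ≤ ∑ i, |c i| := by
      refine Finset.sum_le_sum fun i _ => ?_
      have hle1 : α i ≤ 1 := by
        have := Finset.single_le_sum (fun j _ => hα.1 j) (Finset.mem_univ i)
        rw [hα.2] at this; exact this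
      calc α i * c i ≤ α i * |c i| := mul_le_mul_of_nonneg_left (le_abs_self _) (hα.1 i)
        _ ≤ 1 * |c i| := mul_le_mul_of_nonneg_right hle1 (abs_nonneg _)
        _ = |c i| := one_mul _
    have h2 : 0 ≤ (L - μ) / 2 * ‖y - (1 / (L - μ)) • ∑ i, α i • (g i - μ • x i)‖ ^ 2 := by
      positivity
    simp only [vT, ← hc]
    linarith
  have hne : ∀ y, (vT L μ x g f y '' stdSimplex ℝ (Option (Fin (N + 1)))).Nonempty :=
    fun y => ⟨_, Set.mem_image_of_mem _ hδmem⟩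
  have hVz_le : VT L μ x g f z ≤ f none := by
    refine csSup_le (hne z) ?_
    rintro b ⟨α, hα, rfl⟩
    exact key α hα
  have hVy_ge : ∀ y, f none + μ/2*‖y - z‖^2 ≤ VT L μ x g f y := by
    intro y
    rw [← vδ y]
    exact le_csSup (hbdd y) (Set.mem_image_of_mem _ hδmem)
  refine ⟨?_, ?_, ?_⟩
  · intro y
    have := hVy_ge y
    have h0 : 0 ≤ μ/2*‖y - z‖^2 := by positivity
    linarith
  · intro y hy
    have h1 := hy z
    have h2 := hVy_ge y
    have h3 : μ/2*‖y - z‖^2 ≤ 0 := by linarith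
    have h4 : ‖y - z‖^2 ≤ 0 := by
      by_contra h
      push_neg at h
      have : 0 < μ/2*‖y - z‖^2 := by positivity
      linarith
    have h6 : ‖y - z‖^2 = 0 := le_antisymm h4 (sq_nonneg _)
    have h5 : ‖y - z‖ = 0 := by
      exact pow_eq_zero_iff (two_ne_zero) |>.mp h6
    have := norm_eq_zero.mp h5
    exact sub_eq_zero.mp this
  · intro y hy
    have hWy : ⟪x (some (Fin.last N)) - z, y⟫ = 0 := by
      induction hy using Submodule.span_induction with
      | mem v hv =>
          obtain ⟨i, hi, rfl⟩ := hv
          exact horth i hi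
      | zero => simp
      | add a b _ _ ha hb => rw [inner_add_right, ha, hb, add_zero]
      | smul r a _ h => rw [real_inner_smul_right, h, mul_zero]
    have hWN : ⟪x (some (Fin.last N)) - z, x (some (Fin.last N))⟫ = 0 := horthx
    have hdec : ‖y - z‖^2 = ‖y - x (some (Fin.last N))‖^2 + ‖x (some (Fin.last N)) - z‖^2 := by
      have hsplit : y - z = (y - x (some (Fin.last N))) + (x (some (Fin.last N)) - z) := by abel
      rw [hsplit, norm_add_sq_real]
      have : ⟪y - x (some (Fin.last N)), x (some (Fin.last N)) - z⟫ = 0 := by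
        rw [real_inner_comm, inner_sub_right, hWy, hWN]
        ring
      rw [this]; ring
    have h6 : ‖x (some (Fin.last N)) - z‖^2 ≤ ‖y - z‖^2 := by
      rw [hdec]; linarith [sq_nonneg ‖y - x (some (Fin.last N))‖]
    have h7 := Real.sqrt_le_sqrt h6
    rwa [Real.sqrt_sq (norm_nonneg _), Real.sqrt_sq (norm_nonneg _)] at h7
end

section
/- Let 0 < μ < L, R_x > 0, and for integers j ≥ 0 define γ_j = √(μ/L)·√(1 − (1 − √(μ/L))²)·(1 − √(μ/L))^j · R_x and δ_j = √(1 − (1 − √(μ/L))²)·(1 − √(μ/L))^j · R_x. Then: (a) 0 ≤ (μ/L)δ_j ≤ γ_j ≤ δ_j for all j; (b) γ_{j+1}δ_{j+1} = −(γ_j − δ_j)(γ_j − (μ/L)δ_j) for all j (the recurrence holds with equality); (c) Σ_{k=0}^∞ δ_k² = R_x² (so in particular Σ_{k=0}^N δ_k² ≤ R_x² for every N); and (d) for every N, (L²/(2(L−μ)))(2γ_N δ_N − γ_N² − (μ/L)δ_N²) = μ·((2 − √(μ/L))/(1 + √(μ/L)))·(1 − √(μ/L))^{2N} · R_x². -/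
open scoped BigOperators

/-- The explicit geometric sequences `γ_j, δ_j` satisfy the conditions of Theorem
`lowerPEP` for `0 < μ < L` (with the recurrence holding with equality), their squared
`δ`'s sum to `R_x²`, and the resulting lower-bound quantity has the stated closed form. -/
theorem stmt13 {L μ Rx : ℝ} (hμ : 0 < μ) (hμL : μ < L) (hRx : 0 < Rx)
    (γ δ : ℕ → ℝ)
    (hγ : ∀ j : ℕ, γ j = Real.sqrt (μ / L)
        * Real.sqrt (1 - (1 - Real.sqrt (μ / L)) ^ 2)
        * (1 - Real.sqrt (μ / L)) ^ j * Rx)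
    (hδ : ∀ j : ℕ, δ j = Real.sqrt (1 - (1 - Real.sqrt (μ / L)) ^ 2)
        * (1 - Real.sqrt (μ / L)) ^ j * Rx) :
    (∀ j : ℕ, 0 ≤ μ / L * δ j ∧ μ / L * δ j ≤ γ j ∧ γ j ≤ δ j) ∧
    (∀ j : ℕ, γ (j + 1) * δ (j + 1) = -((γ j - δ j) * (γ j - μ / L * δ j))) ∧
    (HasSum (fun k : ℕ => δ k ^ 2) (Rx ^ 2) ∧
      ∀ N : ℕ, ∑ k ∈ Finset.range (N + 1), δ k ^ 2 ≤ Rx ^ 2) ∧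
    (∀ N : ℕ, L ^ 2 / (2 * (L - μ)) * (2 * γ N * δ N - γ N ^ 2 - μ / L * δ N ^ 2)
        = μ * ((2 - Real.sqrt (μ / L)) / (1 + Real.sqrt (μ / L)))
          * (1 - Real.sqrt (μ / L)) ^ (2 * N) * Rx ^ 2) := by
  have hL : 0 < L := hμ.trans hμL
  set κ := Real.sqrt (μ / L) with hκdef
  have hratio0 : 0 < μ / L := div_pos hμ hL
  have hratio1 : μ / L < 1 := (div_lt_one hL).2 hμL
  have hκ0 : 0 < κ := Real.sqrt_pos.2 hratio0
  have hκ1 : κ < 1 := by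
    rw [hκdef, show (1 : ℝ) = Real.sqrt 1 by simp]
    exact Real.sqrt_lt_sqrt hratio0.le hratio1
  have hκ2 : κ ^ 2 = μ / L := Real.sq_sqrt hratio0.le
  set ρ := 1 - κ with hρdef
  have hρ0 : 0 ≤ ρ := by simp [hρdef]; linarith
  have hρ1 : ρ < 1 := by simp [hρdef]; linarith
  have hρ2nonneg : 0 ≤ 1 - ρ ^ 2 := by nlinarith
  set s := Real.sqrt (1 - ρ ^ 2) with hsdef
  have hs2 : s ^ 2 = 1 - ρ ^ 2 := Real.sq_sqrt hρ2nonneg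
  have hs0 : 0 ≤ s := Real.sqrt_nonneg _
  clear_value s
  clear hsdef
  clear_value ρ
  clear_value κ
  refine ⟨?_, ?_, ⟨?_, ?_⟩, ?_⟩
  · intro j
    have hδj : 0 ≤ δ j := by
      rw [hδ j]
      positivity
    have ht : 0 ≤ s * ρ ^ j * Rx := by positivity
    have hκκ : κ ^ 2 ≤ κ := by nlinarith
    refine ⟨by positivity, ?_, ?_⟩
    · rw [hγ j, hδ j, ← hκ2]
      calc κ ^ 2 * (s * ρ ^ j * Rx) ≤ κ * (s * ρ ^ j * Rx) :=
            mul_le_mul_of_nonneg_right hκκ ht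
        _ = κ * s * ρ ^ j * Rx := by ring
    · rw [hγ j, hδ j]
      calc κ * s * ρ ^ j * Rx = κ * (s * ρ ^ j * Rx) := by ring
        _ ≤ 1 * (s * ρ ^ j * Rx) := mul_le_mul_of_nonneg_right hκ1.le ht
        _ = s * ρ ^ j * Rx := by ring
  · intro j
    rw [hγ (j+1), hδ (j+1), hγ j, hδ j, ← hκ2, hρdef]
    ring
  · have hgeom : HasSum (fun n : ℕ => ((1 - ρ ^ 2) * Rx ^ 2) * (ρ ^ 2) ^ n)
        (((1 - ρ ^ 2) * Rx ^ 2) * (1 - ρ ^ 2)⁻¹ ) := by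
      exact (hasSum_geometric_of_lt_one (by positivity) (by nlinarith)).mul_left _
    have h1ρ2 : (1 : ℝ) - ρ ^ 2 ≠ 0 := by nlinarith
    have : ((1 - ρ ^ 2) * Rx ^ 2) * (1 - ρ ^ 2)⁻¹ = Rx ^ 2 := by
      field_simp
    rw [this] at hgeom
    convert hgeom using 2 with n
    rw [hδ n]
    rw [← hs2]
    ring
  · intro N
    have hsum : HasSum (fun k : ℕ => δ k ^ 2) (Rx ^ 2) := by
      have hgeom : HasSum (fun n : ℕ => ((1 - ρ ^ 2) * Rx ^ 2) * (ρ ^ 2) ^ n)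
          (((1 - ρ ^ 2) * Rx ^ 2) * (1 - ρ ^ 2)⁻¹ ) :=
        (hasSum_geometric_of_lt_one (by positivity) (by nlinarith)).mul_left _
      have h1ρ2 : (1 : ℝ) - ρ ^ 2 ≠ 0 := by nlinarith
      have : ((1 - ρ ^ 2) * Rx ^ 2) * (1 - ρ ^ 2)⁻¹ = Rx ^ 2 := by field_simp
      rw [this] at hgeom
      convert hgeom using 2 with n
      rw [hδ n, ← hs2]; ring
    exact sum_le_hasSum _ (fun i _ => sq_nonneg _) hsum
  · intro N
    rw [hγ N, hδ N, ← hκ2]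
    have hLμ : L - μ = L * (1 - κ) * (1 + κ) := by
      have : μ = L * κ ^ 2 := by rw [hκ2]; field_simp
      rw [this]; ring
    have h1κ : (1 : ℝ) + κ ≠ 0 := by positivity
    have h1mκ : (1 : ℝ) - κ ≠ 0 := by linarith
    have key : 2 * (κ * s * ρ ^ N * Rx) * (s * ρ ^ N * Rx)
        - (κ * s * ρ ^ N * Rx) ^ 2 - κ ^ 2 * (s * ρ ^ N * Rx) ^ 2
        = 2 * κ * (1 - κ) * (1 - ρ ^ 2) * (ρ ^ 2) ^ N * Rx ^ 2 := by
      rw [← hs2]; ring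
    rw [key]
    have hρ2 : 1 - ρ ^ 2 = κ * (2 - κ) := by rw [hρdef]; ring
    rw [hρ2]
    rw [show (ρ : ℝ) ^ (2 * N) = (ρ ^ 2) ^ N by rw [← pow_mul]]
    have hμeq : μ = L * κ ^ 2 := by rw [hκ2]; field_simp
    rw [hLμ, hμeq]
    field_simp
end

section
/- Let 0 < μ < L and q = μ/L. Then the sequence (λ_i) is well-defined and satisfies, for every i ≥ 0: 0 ≤ λ_i ≤ √q, hence q² ≤ q − (1−q)λ_i² ≤ q (in particular q − (1−q)λ_i² ≥ 0), and moreover ((1 − √q)/(1 + q))·λ_i ≤ λ_{i+1} ≤ (1 − q)·λ_i. -/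
/-- Auxiliary: all the one-step facts for `x ∈ [0, √q]`. -/
lemma stmt15_aux {q x : ℝ} (hq0 : 0 < q) (hq1 : q < 1)
    (hx0 : 0 ≤ x) (hx1 : x ≤ Real.sqrt q) :
    (q ^ 2 ≤ q - (1 - q) * x ^ 2 ∧ q - (1 - q) * x ^ 2 ≤ q ∧
      0 ≤ q - (1 - q) * x ^ 2) ∧
    ((1 - Real.sqrt q) / (1 + q) * x ≤
        (1 - Real.sqrt (q - (1 - q) * x ^ 2)) / (1 + x ^ 2) * x ∧
      (1 - Real.sqrt (q - (1 - q) * x ^ 2)) / (1 + x ^ 2) * x ≤ (1 - q) * x) := by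
  have hsq : Real.sqrt q ^ 2 = q := Real.sq_sqrt hq0.le
  have hsq1 : Real.sqrt q ≤ 1 := by
    nlinarith [Real.sqrt_nonneg q]
  have hx2q : x ^ 2 ≤ q := by nlinarith
  have harg1 : q ^ 2 ≤ q - (1 - q) * x ^ 2 := by nlinarith [sq_nonneg x]
  have harg2 : q - (1 - q) * x ^ 2 ≤ q := by nlinarith [sq_nonneg x]
  have harg0 : 0 ≤ q - (1 - q) * x ^ 2 := le_trans (by positivity) harg1
  set s := Real.sqrt (q - (1 - q) * x ^ 2) with hs
  have hs0 : 0 ≤ s := Real.sqrt_nonneg _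
  have hsge : q ≤ s := by
    have := Real.sqrt_le_sqrt harg1
    rwa [Real.sqrt_sq hq0.le] at this
  have hsle : s ≤ Real.sqrt q := by
    have := Real.sqrt_le_sqrt harg2
    exact this
  have hsle1 : s ≤ 1 := le_trans hsle hsq1
  refine ⟨⟨harg1, harg2, harg0⟩, ?_, ?_⟩
  · -- lower bound
    have hden : (0:ℝ) < 1 + x ^ 2 := by positivity
    have hdenq : (0:ℝ) < 1 + q := by linarith
    have hfac : (1 - Real.sqrt q) / (1 + q) ≤ (1 - s) / (1 + x ^ 2) := by
      apply div_le_div₀ (by linarith) (by linarith) hden (by nlinarith)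
    exact mul_le_mul_of_nonneg_right hfac hx0
  · -- upper bound
    have hden : (0:ℝ) < 1 + x ^ 2 := by positivity
    have hfac : (1 - s) / (1 + x ^ 2) ≤ 1 - q := by
      rw [div_le_iff₀ hden]
      nlinarith [sq_nonneg x]
    exact mul_le_mul_of_nonneg_right hfac hx0

/-- The sequence `λ_i` defined by `λ_0 = √q` and
`λ_{i+1} = ((1 − √(q − (1−q)λ_i²))/(1 + λ_i²))·λ_i`, where `q = μ/L ∈ (0,1)`, is
well-defined: it stays in `[0, √q]`, so that `q² ≤ q − (1−q)λ_i² ≤ q` (in particular the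
argument of the square root is nonnegative), and moreover
`((1 − √q)/(1 + q))·λ_i ≤ λ_{i+1} ≤ (1 − q)·λ_i`. -/
theorem stmt15 {L μ : ℝ} (hμ : 0 < μ) (hμL : μ < L) (q : ℝ) (hq : q = μ / L)
    (lam : ℕ → ℝ) (hlam0 : lam 0 = Real.sqrt q)
    (hlamrec : ∀ i : ℕ, lam (i + 1)
      = (1 - Real.sqrt (q - (1 - q) * lam i ^ 2)) / (1 + lam i ^ 2) * lam i) :
    ∀ i : ℕ,
      (0 ≤ lam i ∧ lam i ≤ Real.sqrt q) ∧
      (q ^ 2 ≤ q - (1 - q) * lam i ^ 2 ∧ q - (1 - q) * lam i ^ 2 ≤ q ∧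
        0 ≤ q - (1 - q) * lam i ^ 2) ∧
      ((1 - Real.sqrt q) / (1 + q) * lam i ≤ lam (i + 1) ∧
        lam (i + 1) ≤ (1 - q) * lam i) := by
  have hL : 0 < L := hμ.trans hμL
  have hq0 : 0 < q := by rw [hq]; positivity
  have hq1 : q < 1 := by rw [hq, div_lt_one hL]; exact hμL
  have hsq0 : 0 ≤ Real.sqrt q := Real.sqrt_nonneg q
  have hsqq : Real.sqrt q ^ 2 = q := Real.sq_sqrt hq0.le
  have key : ∀ i, 0 ≤ lam i ∧ lam i ≤ Real.sqrt q := by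
    intro i
    induction i with
    | zero => rw [hlam0]; exact ⟨hsq0, le_refl _⟩
    | succ n ih =>
      obtain ⟨h0, h1⟩ := ih
      obtain ⟨_, hlo, hhi⟩ := stmt15_aux hq0 hq1 h0 h1
      rw [hlamrec n]
      constructor
      · refine le_trans ?_ hlo
        have : 0 ≤ (1 - Real.sqrt q) / (1 + q) := by
          apply div_nonneg (by nlinarith) (by linarith)
        positivity
      · refine le_trans hhi ?_
        nlinarith
  intro i
  obtain ⟨h0, h1⟩ := key i
  obtain ⟨h2, h3, h4⟩ := stmt15_aux hq0 hq1 h0 h1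
  rw [← hlamrec i] at h3 h4
  exact ⟨⟨h0, h1⟩, h2, h3, h4⟩
end

section
/- Let q ∈ (0,1), N ≥ 1, and let (λ_i) be the sequence with λ_0 = √q and λ_{i+1} = ((1 − √(q − (1−q)λ_i²))/(1 + λ_i²))·λ_i. Suppose (γ_i)_{0≤i≤N}, (δ_i)_{0≤i≤N} satisfy: 0 ≤ qδ_i ≤ γ_i ≤ δ_i for all i; γ_{i+1}δ_{i+1} = −(γ_i − δ_i)(γ_i − qδ_i) for 0 ≤ i ≤ N−1; Σ_{i=0}^N δ_i² = 1; γ_N = √q·λ_N and δ_N = λ_N/√q. Define α = √((q − λ_{N+1}²)/(q − (1−q)λ_N²)) and set γ̂_i = √α·γ_i and δ̂_i = √α·δ_i for 0 ≤ i ≤ N−1, γ̂_N = √(q(αλ_N² + α − 1)), δ̂_N = √((αλ_N² − λ_{N+1}² − q(α−1))/q), γ̂_{N+1} = √q·λ_{N+1}, and δ̂_{N+1} = λ_{N+1}/√q. Then: (a) 0 ≤ qδ̂_i ≤ γ̂_i ≤ δ̂_i for all 0 ≤ i ≤ N+1; (b) γ̂_{i+1}δ̂_{i+1} = −(γ̂_i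 − δ̂_i)(γ̂_i − qδ̂_i) for all 0 ≤ i ≤ N; (c) γ̂_{N+1}δ̂_{N+1} = λ_{N+1}²; and (d) Σ_{i=0}^{N+1} δ̂_i² = 1. -/
open scoped BigOperators

set_option maxHeartbeats 1000000

/-- The inductive step in the proof of Corollary `exactLower`: if `(γ_i), (δ_i)` satisfy
the conditions of Theorem `lowerPEP` with equality, unit sum of `δ²`'s, and endpoint
values `γ_N = √q·λ_N`, `δ_N = λ_N/√q`, then the rescaled/extended sequences
`(γ̂_i), (δ̂_i)` satisfy the same conditions one step further. -/
theorem stmt19 {q : ℝ} (hq0 : 0 < q) (hq1 : q < 1) {N : ℕ} (hN : 1 ≤ N)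
    (lam : ℕ → ℝ) (hlam0 : lam 0 = Real.sqrt q)
    (hlamrec : ∀ i : ℕ, lam (i + 1)
      = (1 - Real.sqrt (q - (1 - q) * lam i ^ 2)) / (1 + lam i ^ 2) * lam i)
    (γ δ : ℕ → ℝ)
    (h1 : ∀ i ≤ N, 0 ≤ q * δ i ∧ q * δ i ≤ γ i ∧ γ i ≤ δ i)
    (h2 : ∀ i < N, γ (i + 1) * δ (i + 1) = -((γ i - δ i) * (γ i - q * δ i)))
    (h3 : ∑ i ∈ Finset.range (N + 1), δ i ^ 2 = 1)
    (hγN : γ N = Real.sqrt q * lam N) (hδN : δ N = lam N / Real.sqrt q)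
    (α : ℝ) (hα : α = Real.sqrt ((q - lam (N + 1) ^ 2) / (q - (1 - q) * lam N ^ 2)))
    (γ' δ' : ℕ → ℝ)
    (hγ'lt : ∀ i < N, γ' i = Real.sqrt α * γ i)
    (hδ'lt : ∀ i < N, δ' i = Real.sqrt α * δ i)
    (hγ'N : γ' N = Real.sqrt (q * (α * lam N ^ 2 + α - 1)))
    (hδ'N : δ' N = Real.sqrt ((α * lam N ^ 2 - lam (N + 1) ^ 2 - q * (α - 1)) / q))
    (hγ'N1 : γ' (N + 1) = Real.sqrt q * lam (N + 1))
    (hδ'N1 : δ' (N + 1) = lam (N + 1) / Real.sqrt q) :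
    (∀ i ≤ N + 1, 0 ≤ q * δ' i ∧ q * δ' i ≤ γ' i ∧ γ' i ≤ δ' i) ∧
    (∀ i ≤ N, γ' (i + 1) * δ' (i + 1) = -((γ' i - δ' i) * (γ' i - q * δ' i))) ∧
    (γ' (N + 1) * δ' (N + 1) = lam (N + 1) ^ 2) ∧
    (∑ i ∈ Finset.range (N + 2), δ' i ^ 2 = 1) := by
  have hqle : (0:ℝ) ≤ q := hq0.le
  have hsq_pos : 0 < Real.sqrt q := Real.sqrt_pos.mpr hq0
  have hsqq : Real.sqrt q ^ 2 = q := Real.sq_sqrt hqle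
  -- bounds on lam
  have hlamB : ∀ i, 0 ≤ lam i ∧ lam i ^ 2 ≤ q := by
    intro i
    induction i with
    | zero =>
      rw [hlam0]
      exact ⟨Real.sqrt_nonneg q, by rw [Real.sq_sqrt hqle]⟩
    | succ n ih =>
      obtain ⟨h0, hle⟩ := ih
      have hdisc : 0 ≤ q - (1 - q) * lam n ^ 2 := by
        linarith only [hle, mul_nonneg hqle (sq_nonneg (lam n))]
      set u := Real.sqrt (q - (1 - q) * lam n ^ 2) with hu
      have hu0 : 0 ≤ u := Real.sqrt_nonneg _
      have hu2 : u ^ 2 = q - (1 - q) * lam n ^ 2 := Real.sq_sqrt hdisc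
      have hu1 : u ≤ 1 := by
        linarith only [hu2, sq_nonneg (u - 1), hq1.le,
          mul_nonneg (sub_nonneg.mpr hq1.le) (sq_nonneg (lam n))]
      have hd : (0:ℝ) < 1 + lam n ^ 2 := by positivity
      rw [hlamrec n, ← hu]
      constructor
      · exact mul_nonneg (div_nonneg (by linarith) hd.le) h0
      · have hc1 : (1 - u) / (1 + lam n ^ 2) ≤ 1 := by
          rw [div_le_one hd]; linarith only [hu0, sq_nonneg (lam n)]
        have hc0 : 0 ≤ (1 - u) / (1 + lam n ^ 2) := div_nonneg (by linarith) hd.le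
        calc ((1 - u) / (1 + lam n ^ 2) * lam n) ^ 2
            = ((1 - u) / (1 + lam n ^ 2)) ^ 2 * lam n ^ 2 := by ring
          _ ≤ 1 * lam n ^ 2 := by
              have hcc : ((1 - u) / (1 + lam n ^ 2)) ^ 2 ≤ 1 := by
                nlinarith only [hc1, hc0]
              nlinarith only [hcc, sq_nonneg (lam n)]
          _ ≤ q := by linarith
  obtain ⟨hN0, htq⟩ := hlamB N
  obtain ⟨hL0, hLq⟩ := hlamB (N + 1)
  have hLrec := hlamrec N
  set t := lam N ^ 2 with ht
  have ht0 : 0 ≤ t := sq_nonneg _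
  have h1t : (0:ℝ) < 1 + t := by linarith
  have hdisc : 0 ≤ q - (1 - q) * t := by linarith [mul_nonneg hqle ht0]
  set s := Real.sqrt (q - (1 - q) * t) with hs_def
  set L := lam (N + 1) with hL_def
  have hs2 : s ^ 2 = q - (1 - q) * t := Real.sq_sqrt hdisc
  have hs_pos : 0 < s := by
    apply Real.sqrt_pos.mpr
    linarith only [mul_nonneg (sub_nonneg.mpr hq1.le) (sub_nonneg.mpr htq),
      mul_pos hq0 hq0]
  have hs1 : s ≤ 1 := by
    linarith only [hs2, sq_nonneg (s - 1), hq1.le,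
      mul_nonneg (sub_nonneg.mpr hq1.le) ht0]
  have hs0 : 0 ≤ s := hs_pos.le
  have hsle : 1 - s ≤ (1 - q) * (1 + t) := by
    linarith only [hs2, mul_nonneg hs0 (sub_nonneg.mpr hs1)]
  have hq' : q = (s ^ 2 + t) / (1 + t) := by
    rw [eq_div_iff (ne_of_gt h1t)]; linarith [hs2]
  have hL2 : L ^ 2 = (1 - s) ^ 2 * t / (1 + t) ^ 2 := by
    rw [hLrec]; rw [mul_pow, div_pow, ← ht]; ring
  have hkey : q - L ^ 2 = ((s + t) / (1 + t)) ^ 2 := by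
    rw [hL2, hq']; field_simp; ring
  have hαval : α = (s + t) / (s * (1 + t)) := by
    rw [hα, hkey, ← hs2]
    rw [show ((s + t) / (1 + t)) ^ 2 / s ^ 2 = ((s + t) / (s * (1 + t))) ^ 2 by
      field_simp]
    exact Real.sqrt_sq (by positivity)
  have hα0 : 0 < α := by rw [hαval]; positivity
  have hαs : α * s = (s + t) / (1 + t) := by
    rw [hαval]; field_simp
  have hαs1 : α * s ≤ 1 := by
    rw [hαs, div_le_one h1t]; linarith
  have hαs2 : (α * s) ^ 2 = q - L ^ 2 := by rw [hαs, ← hkey]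
  have hL2q : L ^ 2 ≤ q * (1 - q) := by
    have h1s : 0 ≤ 1 - s := by linarith
    have h1 : L ^ 2 ≤ (1 - q) ^ 2 * t := by
      rw [hL2, div_le_iff₀ (by positivity)]
      nlinarith only [ht0,
        mul_le_mul hsle hsle h1s
          (mul_nonneg (sub_nonneg.mpr hq1.le) h1t.le)]
    linarith only [h1, mul_nonneg (sub_nonneg.mpr hq1.le) (sub_nonneg.mpr htq),
      mul_nonneg (sub_nonneg.mpr hq1.le) (mul_nonneg hqle ht0)]
  have hYval : α * t + α - 1 = t / s := by
    rw [hαval]; field_simp; ring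
  have hXval : α * t - L ^ 2 - q * (α - 1) = α ^ 2 * s * t := by
    rw [hαval, hL2, hq']; field_simp; ring
  -- rewritten forms of endpoint values
  have hgN : γ' N = Real.sqrt (q * (t / s)) := by rw [hγ'N, hYval]
  have hdN : δ' N = Real.sqrt (α ^ 2 * s * t / q) := by rw [hδ'N, hXval]
  have hqts0 : 0 ≤ q * (t / s) := mul_nonneg hqle (div_nonneg ht0 hs0)
  have hast0 : 0 ≤ α ^ 2 * s * t := mul_nonneg (mul_nonneg (sq_nonneg α) hs0) ht0
  have hgN2 : γ' N ^ 2 = q * (t / s) := by rw [hgN, Real.sq_sqrt hqts0]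
  have hdN2 : δ' N ^ 2 = α ^ 2 * s * t / q := by
    rw [hdN, Real.sq_sqrt (div_nonneg hast0 hqle)]
  have hgd : γ' N * δ' N = α * t := by
    rw [hgN, hdN, ← Real.sqrt_mul hqts0]
    rw [show q * (t / s) * (α ^ 2 * s * t / q) = (α * t) ^ 2 by
      field_simp]
    exact Real.sqrt_sq (mul_nonneg hα0.le ht0)
  have hc : γ' (N + 1) * δ' (N + 1) = L ^ 2 := by
    rw [hγ'N1, hδ'N1]
    field_simp
  have hδN2 : δ N ^ 2 = t / q := by
    rw [hδN, div_pow, hsqq, ← ht]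
  -- Part (a)
  have parta : ∀ i ≤ N + 1, 0 ≤ q * δ' i ∧ q * δ' i ≤ γ' i ∧ γ' i ≤ δ' i := by
    intro i hi
    rcases lt_or_ge i N with hiN | hiN
    · obtain ⟨ha, hb, hcc⟩ := h1 i hiN.le
      rw [hγ'lt i hiN, hδ'lt i hiN]
      have hsa := Real.sqrt_nonneg α
      refine ⟨by linarith only [mul_nonneg (Real.sqrt_nonneg α) ha],
        by linarith only [mul_nonneg (Real.sqrt_nonneg α) (sub_nonneg.mpr hb)],
        by linarith only [mul_nonneg (Real.sqrt_nonneg α) (sub_nonneg.mpr hcc)]⟩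
    · have : i = N ∨ i = N + 1 := by omega
      rcases this with rfl | rfl
      · rw [hgN, hdN]
        have hqd : q * Real.sqrt (α ^ 2 * s * t / q)
            = Real.sqrt (q * (α ^ 2 * s * t)) := by
          rw [show q * (α ^ 2 * s * t) = q ^ 2 * (α ^ 2 * s * t / q) by
            field_simp, Real.sqrt_mul (sq_nonneg q), Real.sqrt_sq hqle]
        refine ⟨mul_nonneg hqle (Real.sqrt_nonneg _), ?_, ?_⟩
        · rw [hqd]
          apply Real.sqrt_le_sqrt
          have h1' : (α * s) ^ 2 ≤ 1 := by
            nlinarith only [hαs1, mul_nonneg hα0.le hs0]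
          rw [← mul_div_assoc, le_div_iff₀ hs_pos]
          nlinarith only [h1', mul_nonneg hqle ht0]
        · apply Real.sqrt_le_sqrt
          have hq2L : q ^ 2 ≤ q - L ^ 2 := by linarith only [hL2q]
          rw [← mul_div_assoc, div_le_div_iff₀ hs_pos hq0]
          nlinarith only [hαs2, ht0,
            mul_nonneg ht0 (by linarith only [hq2L] : (0:ℝ) ≤ q - L ^ 2 - q ^ 2)]
      · rw [hγ'N1, hδ'N1]
        have hms : Real.sqrt q * Real.sqrt q = q := Real.mul_self_sqrt hqle
        have heq : q * (L / Real.sqrt q) = Real.sqrt q * L := by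
          field_simp
          linear_combination (-L) * hms
        refine ⟨?_, le_of_eq heq, ?_⟩
        · exact mul_nonneg hqle (div_nonneg hL0 hsq_pos.le)
        · rw [le_div_iff₀ hsq_pos]
          nlinarith only [hms, hL0,
            mul_nonneg hL0 (sub_nonneg.mpr hq1.le)]
  refine ⟨parta, ?_, ?_, ?_⟩
  -- Part (b)
  · intro i hi
    rcases (by omega : i + 1 < N ∨ i + 1 = N ∨ i = N) with h | h | rfl
    · have hiN : i < N := by omega
      rw [hγ'lt _ h, hδ'lt _ h, hγ'lt _ hiN, hδ'lt _ hiN]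
      have H := h2 i hiN
      linear_combination Real.sqrt α ^ 2 * H
    · have hiN : i < N := by omega
      have H := h2 i hiN
      rw [h] at H
      have hgdN : γ N * δ N = t := by
        rw [hγN, hδN, ht]; field_simp
      have hsa : Real.sqrt α ^ 2 = α := Real.sq_sqrt hα0.le
      rw [h, hγ'lt _ hiN, hδ'lt _ hiN]
      linear_combination hgd + Real.sqrt α ^ 2 * H - Real.sqrt α ^ 2 * hgdN
        - t * hsa
    · have hkeyB : L ^ 2 = -(q * (t / s)) + (1 + q) * (α * t)
          - q * (α ^ 2 * s * t / q) := by
        rw [hαval, hL2, hq']; field_simp; ring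
      linear_combination hc + hgN2 - (1 + q) * hgd + q * hdN2 + hkeyB
  -- Part (c)
  · exact hc
  -- Part (d)
  · rw [Finset.sum_range_succ, Finset.sum_range_succ]
    have hsum : ∑ i ∈ Finset.range N, δ i ^ 2 = 1 - δ N ^ 2 := by
      rw [Finset.sum_range_succ] at h3; linarith
    have hsum' : ∑ i ∈ Finset.range N, δ' i ^ 2 = α * (1 - t / q) := by
      rw [← hδN2, ← hsum, Finset.mul_sum]
      apply Finset.sum_congr rfl
      intro i hi
      rw [hδ'lt i (Finset.mem_range.mp hi), mul_pow, Real.sq_sqrt hα0.le]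
    have hδ'N1sq : δ' (N + 1) ^ 2 = L ^ 2 / q := by
      rw [hδ'N1, div_pow, hsqq]
    rw [hsum', hdN2, hδ'N1sq]
    rw [hαval, hL2, hq']
    field_simp
    ring
end
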